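/- arXiv:0802.3675 — 5 statements merged into one kernel-verified Lean document; each statement's English description precedes it below -/
import Mathlib

section
/- The set R_d is closed under multiplication and contains 1, i.e. R_d is a subring of the polynomial ring ℚ[t_1,…,t_d]. -/
open MvPolynomial

noncomputable section

instance strIncDec (p n : ℕ) : DecidablePred (fun α : Fin p → Fin n => StrictMono α) :=
  fun α => decidable_of_iff (∀ a b : Fin p, a < b → α a < α b) Iff.rfl

/-- Strictly increasing maps `Fin p → Fin n`. -/
abbrev StrInc (p n : ℕ) : Type := {α : Fin p → Fin n // StrictMono α}

/-- The ideal `I_n = (t_1 ⋯ t_n)·ℚ[t_1,…,t_n]`. -/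
def Iset (n : ℕ) : Set (MvPolynomial (Fin n) ℚ) :=
  {p | ∃ q, p = (∏ i, X i) * q}

/-- The subset `R_d ⊆ ℚ[t_1,…,t_d]`. -/
def Rset (d : ℕ) : Set (MvPolynomial (Fin d) ℚ) :=
  {F | ∃ f : (n : Fin (d+1)) → MvPolynomial (Fin n.1) ℚ,
    (∀ n, f n ∈ Iset n.1) ∧
    F = ∑ n : Fin (d+1), ∑ α : StrInc n.1 d, rename α.1 (f n)}

/-- Setting `t_{d+1} = 0` : the map `ℚ[t_1,…,t_{d+1}] → ℚ[t_1,…,t_d]`. -/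
def projT (d : ℕ) : MvPolynomial (Fin (d+1)) ℚ →ₐ[ℚ] MvPolynomial (Fin d) ℚ :=
  aeval (fun i : Fin (d+1) => if h : (i : ℕ) < d then X ⟨i, h⟩ else 0)

abbrev Rbig := (n : ℕ) → MvPolynomial (Fin n) ℚ

/-- A pair of strictly increasing maps whose images jointly cover `Fin n`. -/
abbrev Covers {p q n : ℕ} (α : StrInc p n) (β : StrInc q n) : Prop :=
  ∀ i : Fin n, (∃ j, α.1 j = i) ∨ (∃ j, β.1 j = i)

/-- The product of the ring `R = ⊕_n I_n`. -/
def mulR (f g : Rbig) : Rbig := fun n =>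
  ∑ p : Fin (n+1), ∑ q : Fin (n+1), ∑ α : StrInc p.1 n, ∑ β : StrInc q.1 n,
    if Covers α β then rename α.1 (f p.1) * rename β.1 (g q.1) else 0

/-- The element of `⊕_n ℚ[t_1,…,t_n]` concentrated in component `m`. -/
def sing (m : ℕ) (p : MvPolynomial (Fin m) ℚ) : Rbig :=
  fun n => if h : n = m then cast (by rw [h]) p else 0

/-- The carrier of `R = ⊕_{n ≥ 0} I_n`. -/
def RsetAll : Set Rbig :=
  {f | (∀ n, f n ∈ Iset n) ∧ {n | f n ≠ 0}.Finite}

/-- The graded ring homomorphism `R → R_d`. -/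
def theta (d : ℕ) (f : Rbig) : MvPolynomial (Fin d) ℚ :=
  ∑ n : Fin (d+1), ∑ α : StrInc n.1 d, rename α.1 (f n.1)

/-- Elements of the degreewise inverse limit `lim'_d R_d` of graded rings. -/
def CompatFam : Set ((d : ℕ) → MvPolynomial (Fin d) ℚ) :=
  {F | (∀ d, F d ∈ Rset d) ∧ (∀ d, projT d (F (d+1)) = F d) ∧
    ∃ N, ∀ d, (F d).totalDegree ≤ N}

end

noncomputable section
namespace RdAux
open Finset

variable {d p q n : ℕ}

lemma Iset_zero (n : ℕ) : (0 : MvPolynomial (Fin n) ℚ) ∈ Iset n := ⟨0, (mul_zero _).symm⟩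

lemma Iset_add {a b : MvPolynomial (Fin n) ℚ} (ha : a ∈ Iset n) (hb : b ∈ Iset n) :
    a + b ∈ Iset n := by
  obtain ⟨qa, rfl⟩ := ha; obtain ⟨qb, rfl⟩ := hb
  exact ⟨qa + qb, (mul_add _ _ _).symm⟩

lemma Iset_sum {σ : Type*} (s : Finset σ) (F : σ → MvPolynomial (Fin n) ℚ)
    (h : ∀ i ∈ s, F i ∈ Iset n) : ∑ i ∈ s, F i ∈ Iset n := by
  classical
  induction s using Finset.induction with
  | empty => simpa using Iset_zero n
  | insert _ _ hnot ih =>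
      rw [Finset.sum_insert hnot]
      exact Iset_add (h _ (mem_insert_self _ _)) (ih fun i hi => h i (mem_insert_of_mem hi))

lemma mul_mem_Iset {α : StrInc p n} {β : StrInc q n} (hc : Covers α β)
    {a : MvPolynomial (Fin p) ℚ} {b : MvPolynomial (Fin q) ℚ}
    (ha : a ∈ Iset p) (hb : b ∈ Iset q) :
    rename α.1 a * rename β.1 b ∈ Iset n := by
  obtain ⟨qa, rfl⟩ := ha; obtain ⟨qb, rfl⟩ := hb
  rw [map_mul, map_mul, map_prod, map_prod]
  simp only [rename_X]
  have hAB : (univ.image α.1) ∪ (univ.image β.1) = (univ : Finset (Fin n)) := by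
    ext i
    simp only [mem_union, mem_image, mem_univ, iff_true, true_and]
    rcases hc i with ⟨j, hj⟩ | ⟨j, hj⟩
    · exact Or.inl ⟨j, hj⟩
    · exact Or.inr ⟨j, hj⟩
  have h1 : (∏ i : Fin p, (X (α.1 i) : MvPolynomial (Fin n) ℚ)) = ∏ i ∈ univ.image α.1, X i :=
    (prod_image (fun x _ y _ h => α.2.injective h)).symm
  have h2 : (∏ i : Fin q, (X (β.1 i) : MvPolynomial (Fin n) ℚ)) = ∏ i ∈ univ.image β.1, X i :=
    (prod_image (fun x _ y _ h => β.2.injective h)).symm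
  have h3 : (∏ i ∈ univ.image α.1, (X i : MvPolynomial (Fin n) ℚ)) * ∏ i ∈ univ.image β.1, X i
      = (∏ i : Fin n, X i) * ∏ i ∈ (univ.image α.1 ∩ univ.image β.1), X i := by
    rw [← prod_union_inter, hAB]
  refine ⟨(∏ i ∈ (univ.image α.1 ∩ univ.image β.1), X i) * rename α.1 qa * rename β.1 qb, ?_⟩
  rw [h1, h2, mul_mul_mul_comm, h3]; ring

def comp (γ : StrInc n d) (α : StrInc p n) : StrInc p d := ⟨γ.1 ∘ α.1, γ.2.comp α.2⟩

def imgs (α : StrInc p d) (β : StrInc q d) : Finset (Fin d) :=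
  univ.image α.1 ∪ univ.image β.1

lemma imgs_card_le (α : StrInc p d) (β : StrInc q d) : (imgs α β).card ≤ d :=
  le_trans (card_le_univ _) (by simp)

lemma mem_imgs_left (α : StrInc p d) (β : StrInc q d) (i : Fin p) : α.1 i ∈ imgs α β :=
  mem_union_left _ (mem_image_of_mem _ (mem_univ i))

lemma mem_imgs_right (α : StrInc p d) (β : StrInc q d) (i : Fin q) : β.1 i ∈ imgs α β :=
  mem_union_right _ (mem_image_of_mem _ (mem_univ i))

def embStr (S : Finset (Fin d)) : StrInc S.card d :=
  ⟨S.orderEmbOfFin rfl, (S.orderEmbOfFin rfl).strictMono⟩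

def lower (S : Finset (Fin d)) (α : StrInc p d) (h : ∀ i, α.1 i ∈ S) : StrInc p S.card :=
  ⟨fun i => (S.orderIsoOfFin rfl).symm ⟨α.1 i, h i⟩,
   fun i j hij => (S.orderIsoOfFin rfl).symm.strictMono (Subtype.mk_lt_mk.2 (α.2 hij))⟩

lemma emb_lower (S : Finset (Fin d)) (α : StrInc p d) (h : ∀ i, α.1 i ∈ S) (i : Fin p) :
    (embStr S).1 ((lower S α h).1 i) = α.1 i := by
  show S.orderEmbOfFin rfl ((S.orderIsoOfFin rfl).symm ⟨α.1 i, h i⟩) = α.1 i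
  rw [← coe_orderIsoOfFin_apply, OrderIso.apply_symm_apply]

lemma comp_lower (S : Finset (Fin d)) (α : StrInc p d) (h : ∀ i, α.1 i ∈ S) :
    comp (embStr S) (lower S α h) = α :=
  Subtype.ext (funext (emb_lower S α h))

lemma lower_le (S : Finset (Fin d)) (α : StrInc p d) (h : ∀ i, α.1 i ∈ S) : p ≤ S.card := by
  simpa using Fintype.card_le_of_injective _ (lower S α h).2.injective

lemma covers_lower (α : StrInc p d) (β : StrInc q d) :
    Covers (lower (imgs α β) α (mem_imgs_left α β)) (lower (imgs α β) β (mem_imgs_right α β)) := by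
  intro i
  have hmem : (imgs α β).orderEmbOfFin rfl i ∈ imgs α β := orderEmbOfFin_mem _ _ _
  unfold imgs at hmem; rw [mem_union] at hmem
  rcases hmem with h | h
  · obtain ⟨j, -, hj⟩ := mem_image.1 h
    refine Or.inl ⟨j, ((imgs α β).orderEmbOfFin rfl).strictMono.injective ?_⟩
    exact (emb_lower (imgs α β) α (mem_imgs_left α β) j).trans hj
  · obtain ⟨j, -, hj⟩ := mem_image.1 h
    refine Or.inr ⟨j, ((imgs α β).orderEmbOfFin rfl).strictMono.injective ?_⟩
    exact (emb_lower (imgs α β) β (mem_imgs_right α β) j).trans hj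

abbrev Atype (d : ℕ) : Type :=
  Σ p : Fin (d+1), Σ q : Fin (d+1), StrInc p.1 d × StrInc q.1 d

abbrev Btype (d : ℕ) : Type :=
  Σ n : Fin (d+1), Σ _γ : StrInc n.1 d, Σ p : Fin (n.1+1), Σ q : Fin (n.1+1),
    StrInc p.1 n.1 × StrInc q.1 n.1

def toB (x : Atype d) : Btype d :=
  ⟨⟨(imgs x.2.2.1 x.2.2.2).card, Nat.lt_succ_of_le (imgs_card_le _ _)⟩,
   embStr (imgs x.2.2.1 x.2.2.2),
   ⟨x.1.1, Nat.lt_succ_of_le (lower_le _ _ (mem_imgs_left x.2.2.1 x.2.2.2))⟩,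
   ⟨x.2.1.1, Nat.lt_succ_of_le (lower_le _ _ (mem_imgs_right x.2.2.1 x.2.2.2))⟩,
   (lower _ x.2.2.1 (mem_imgs_left _ _), lower _ x.2.2.2 (mem_imgs_right _ _))⟩

def toA (x : Btype d) : Atype d :=
  ⟨⟨x.2.2.1.1, lt_of_le_of_lt (Nat.le_of_lt_succ x.2.2.1.2) x.1.2⟩,
   ⟨x.2.2.2.1.1, lt_of_le_of_lt (Nat.le_of_lt_succ x.2.2.2.1.2) x.1.2⟩,
   (comp x.2.1 x.2.2.2.2.1, comp x.2.1 x.2.2.2.2.2)⟩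

lemma toA_toB (x : Atype d) : toA (toB x) = x := by
  obtain ⟨p, q, α, β⟩ := x
  show (⟨p, q,
    (comp (embStr (imgs α β)) (lower (imgs α β) α (mem_imgs_left α β)),
     comp (embStr (imgs α β)) (lower (imgs α β) β (mem_imgs_right α β)))⟩ : Atype d)
    = ⟨p, q, (α, β)⟩
  rw [comp_lower, comp_lower]

def encF {a b : ℕ} (α : StrInc a b) : ℕ → ℕ :=
  fun k => if h : k < a then (α.1 ⟨k, h⟩).1 else 0

lemma encF_inj {a b : ℕ} {α β : StrInc a b} (h : encF α = encF β) : α = β := by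
  refine Subtype.ext (funext fun i => Fin.ext ?_)
  have h2 := congrFun h i.1
  simpa [encF, i.2] using h2

def encB (x : Btype d) : ℕ × (ℕ → ℕ) × ℕ × ℕ × (ℕ → ℕ) × (ℕ → ℕ) :=
  ⟨x.1.1, encF x.2.1, x.2.2.1.1, x.2.2.2.1.1, encF x.2.2.2.2.1, encF x.2.2.2.2.2⟩

lemma encB_inj : Function.Injective (encB (d := d)) := by
  rintro ⟨n, γ, p, q, α, β⟩ ⟨n', γ', p', q', α', β'⟩ h
  simp only [encB, Prod.mk.injEq] at h
  obtain ⟨hn, hγ, hp, hq, hα, hβ⟩ := h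
  obtain rfl : n = n' := Fin.ext hn
  obtain rfl : γ = γ' := encF_inj hγ
  obtain rfl : p = p' := Fin.ext hp
  obtain rfl : q = q' := Fin.ext hq
  obtain rfl : α = α' := encF_inj hα
  obtain rfl : β = β' := encF_inj hβ
  rfl

lemma toB_toA (x : Btype d) (hc : Covers x.2.2.2.2.1 x.2.2.2.2.2) : toB (toA x) = x := by
  obtain ⟨n, γ, p, q, α, β⟩ := x
  apply encB_inj
  set S : Finset (Fin d) := imgs (comp γ α) (comp γ β) with hSdef
  have hS : S = univ.image γ.1 := by
    ext i
    simp only [hSdef, imgs, comp, mem_union, mem_image, mem_univ, true_and,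
      Function.comp_apply]
    constructor
    · rintro (⟨j, hj⟩ | ⟨j, hj⟩)
      · exact ⟨α.1 j, hj⟩
      · exact ⟨β.1 j, hj⟩
    · rintro ⟨j, hj⟩
      rcases hc j with ⟨k, hk⟩ | ⟨k, hk⟩
      · exact Or.inl ⟨k, by rw [hk, hj]⟩
      · exact Or.inr ⟨k, by rw [hk, hj]⟩
  have hcard : S.card = n.1 := by
    rw [hS, card_image_of_injective _ γ.2.injective, card_univ, Fintype.card_fin]
  have hγe : ∀ i : Fin S.card, (S.orderEmbOfFin rfl) i = γ.1 (Fin.cast hcard i) := by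
    have hfs : ∀ i : Fin S.card, γ.1 (Fin.cast hcard i) ∈ S := by
      intro i
      have hm : γ.1 (Fin.cast hcard i) ∈ univ.image γ.1 := mem_image_of_mem _ (mem_univ _)
      rwa [← hS] at hm
    have hmono : StrictMono (fun i : Fin S.card => γ.1 (Fin.cast hcard i)) :=
      fun i j hij => γ.2 hij
    intro i
    rw [← orderEmbOfFin_unique rfl hfs hmono]
  have hlowα : ∀ i, (((lower S (comp γ α) (mem_imgs_left _ _)).1 i) : ℕ) = (α.1 i : ℕ) := by
    intro i
    have h1 := emb_lower S (comp γ α) (mem_imgs_left _ _) i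
    rw [show (embStr S).1 = ⇑(S.orderEmbOfFin rfl) from rfl] at h1
    rw [hγe] at h1
    have h2 := γ.2.injective h1
    exact congrArg Fin.val h2
  have hlowβ : ∀ i, (((lower S (comp γ β) (mem_imgs_right _ _)).1 i) : ℕ) = (β.1 i : ℕ) := by
    intro i
    have h1 := emb_lower S (comp γ β) (mem_imgs_right _ _) i
    rw [show (embStr S).1 = ⇑(S.orderEmbOfFin rfl) from rfl] at h1
    rw [hγe] at h1
    have h2 := γ.2.injective h1
    exact congrArg Fin.val h2
  show (⟨S.card, encF (embStr S), p.1, q.1,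
        encF (lower S (comp γ α) (mem_imgs_left _ _)),
        encF (lower S (comp γ β) (mem_imgs_right _ _))⟩
      : ℕ × (ℕ → ℕ) × ℕ × ℕ × (ℕ → ℕ) × (ℕ → ℕ))
    = ⟨n.1, encF γ, p.1, q.1, encF α, encF β⟩
  refine Prod.ext hcard (Prod.ext ?_ (Prod.ext rfl (Prod.ext rfl (Prod.ext ?_ ?_))))
  · funext k
    simp only [encF]
    by_cases hk : k < n.1
    · rw [dif_pos (hcard ▸ hk), dif_pos hk]
      have := hγe ⟨k, hcard ▸ hk⟩
      rw [show (embStr S).1 ⟨k, hcard ▸ hk⟩ = (S.orderEmbOfFin rfl) ⟨k, hcard ▸ hk⟩ from rfl]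
      rw [this]
      rfl
    · rw [dif_neg (fun hk' => hk (hcard ▸ hk')), dif_neg hk]
  · funext k
    simp only [encF]
    by_cases hk : k < p.1
    · rw [dif_pos hk, dif_pos hk]; exact hlowα ⟨k, hk⟩
    · rw [dif_neg hk, dif_neg hk]
  · funext k
    simp only [encF]
    by_cases hk : k < q.1
    · rw [dif_pos hk, dif_pos hk]; exact hlowβ ⟨k, hk⟩
    · rw [dif_neg hk, dif_neg hk]

lemma sum_sigma_univ {ι : Type*} [Fintype ι] {κ : ι → Type*} [∀ i, Fintype (κ i)]
    {M : Type*} [AddCommMonoid M] (F : (Σ i, κ i) → M) :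
    ∑ x : Σ i, κ i, F x = ∑ i, ∑ j, F ⟨i, j⟩ := by
  rw [← Finset.univ_sigma_univ, Finset.sum_sigma]

def Aterm (f g : Rbig) (x : Atype d) : MvPolynomial (Fin d) ℚ :=
  rename x.2.2.1.1 (f x.1.1) * rename x.2.2.2.1 (g x.2.1.1)

def Bterm (f g : Rbig) (x : Btype d) : MvPolynomial (Fin d) ℚ :=
  rename (comp x.2.1 x.2.2.2.2.1).1 (f x.2.2.1.1) *
    rename (comp x.2.1 x.2.2.2.2.2).1 (g x.2.2.2.1.1)

def BtermI (f g : Rbig) (x : Btype d) : MvPolynomial (Fin d) ℚ :=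
  if Covers x.2.2.2.2.1 x.2.2.2.2.2 then Bterm f g x else 0

lemma hA (f g : Rbig) : theta d f * theta d g = ∑ x : Atype d, Aterm f g x := by
  simp only [theta, Finset.sum_mul_sum, sum_sigma_univ, Fintype.sum_prod_type, Aterm]

lemma hB (f g : Rbig) : theta d (mulR f g) = ∑ x : Btype d, BtermI f g x := by
  rw [theta]
  simp only [sum_sigma_univ, Fintype.sum_prod_type]
  refine Finset.sum_congr rfl fun n _ => Finset.sum_congr rfl fun γ _ => ?_
  rw [mulR]
  simp only [map_sum]
  refine Finset.sum_congr rfl fun p _ => Finset.sum_congr rfl fun q _ =>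
    Finset.sum_congr rfl fun α _ => Finset.sum_congr rfl fun β _ => ?_
  by_cases hc : Covers α β
  · simp only [BtermI, Bterm, comp, if_pos hc, map_mul, rename_rename]
  · simp only [BtermI, if_neg hc, map_zero]

lemma hAB (f g : Rbig) : ∑ x : Atype d, Aterm f g x = ∑ x : Btype d, BtermI f g x := by
  classical
  have hfil : ∑ x : Btype d, BtermI f g x
      = ∑ x ∈ univ.filter (fun x : Btype d => Covers x.2.2.2.2.1 x.2.2.2.2.2), Bterm f g x := by
    rw [Finset.sum_filter]; rfl
  rw [hfil]
  refine Finset.sum_bij' (fun a _ => toB a) (fun b _ => toA b) ?_ ?_ ?_ ?_ ?_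
  · intro a _
    rw [mem_filter]
    exact ⟨mem_univ _, covers_lower a.2.2.1 a.2.2.2⟩
  · intro b _; exact mem_univ _
  · intro a _; exact toA_toB a
  · intro b hb; exact toB_toA b (mem_filter.1 hb).2
  · intro a _
    obtain ⟨p, q, α, β⟩ := a
    show rename α.1 (f p.1) * rename β.1 (g q.1)
      = rename (comp (embStr (imgs α β)) (lower (imgs α β) α (mem_imgs_left α β))).1 (f p.1)
        * rename (comp (embStr (imgs α β)) (lower (imgs α β) β (mem_imgs_right α β))).1 (g q.1)
    rw [comp_lower, comp_lower]

lemma theta_mul (f g : Rbig) (d : ℕ) :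
    theta d f * theta d g = theta d (mulR f g) :=
  (hA f g).trans ((hAB f g).trans (hB f g).symm)

lemma mulR_mem (f g : Rbig) (hf : ∀ n, f n ∈ Iset n) (hg : ∀ n, g n ∈ Iset n) (n : ℕ) :
    mulR f g n ∈ Iset n := by
  rw [mulR]
  refine Iset_sum _ _ fun p _ => Iset_sum _ _ fun q _ => Iset_sum _ _ fun α _ =>
    Iset_sum _ _ fun β _ => ?_
  by_cases hc : Covers α β
  · rw [if_pos hc]; exact mul_mem_Iset hc (hf p.1) (hg q.1)
  · rw [if_neg hc]; exact Iset_zero n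

lemma theta_mem_Rset (f : Rbig) (hf : ∀ n, f n ∈ Iset n) : theta d f ∈ Rset d :=
  ⟨fun n => f n.1, fun n => hf n.1, rfl⟩

lemma Rset_elim {F : MvPolynomial (Fin d) ℚ} (h : F ∈ Rset d) :
    ∃ f : Rbig, (∀ n, f n ∈ Iset n) ∧ F = theta d f := by
  obtain ⟨f, hf, rfl⟩ := h
  refine ⟨fun n => if h : n < d+1 then f ⟨n, h⟩ else 0, fun n => ?_, ?_⟩
  · dsimp only
    by_cases h : n < d+1
    · rw [dif_pos h]; exact hf ⟨n, h⟩
    · rw [dif_neg h]; exact Iset_zero n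
  · rw [theta]
    refine Finset.sum_congr rfl fun n _ => Finset.sum_congr rfl fun α _ => ?_
    rw [dif_pos n.2]

instance (d : ℕ) : Unique (StrInc 0 d) :=
  ⟨⟨⟨Fin.elim0, fun a => a.elim0⟩⟩, fun a => Subtype.ext (funext fun i => i.elim0)⟩

lemma one_mem (d : ℕ) : (1 : MvPolynomial (Fin d) ℚ) ∈ Rset d := by
  have key : theta d (fun n => if n = 0 then 1 else 0) = 1 := by
    rw [theta]
    rw [Finset.sum_eq_single (0 : Fin (d+1))]
    · show ∑ α : StrInc 0 d, rename α.1 (if (0:ℕ) = 0 then (1 : MvPolynomial (Fin 0) ℚ) else 0) = 1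
      simp
    · intro b _ hb
      have hb' : (b : ℕ) ≠ 0 := fun h => hb (Fin.ext (by simpa using h))
      rw [if_neg hb']
      simp
    · intro h; exact absurd (Finset.mem_univ _) h
  rw [← key]
  apply theta_mem_Rset
  intro n
  by_cases h : n = 0
  · subst h; rw [if_pos rfl]; exact ⟨1, by simp⟩
  · rw [if_neg h]; exact Iset_zero n

end RdAux
end

noncomputable section

theorem stmt_0 (d : ℕ) :
    (1 : MvPolynomial (Fin d) ℚ) ∈ Rset d ∧
    ∀ x ∈ Rset d, ∀ y ∈ Rset d, x * y ∈ Rset d := by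
  constructor
  · exact RdAux.one_mem d
  · intro x hx y hy
    obtain ⟨f, hf, rfl⟩ := RdAux.Rset_elim hx
    obtain ⟨g, hg, rfl⟩ := RdAux.Rset_elim hy
    rw [RdAux.theta_mul]
    exact RdAux.theta_mem_Rset _ (RdAux.mulR_mem f g hf hg)

end
end

section
/- The kernel of the composite ring homomorphism R_d ↪ ℚ[t_1,…,t_d] → ℚ[t_1,…,t_d]/(t_d) = ℚ[t_1,…,t_{d-1}] equals the ideal I_d = (t_1⋯t_d)·ℚ[t_1,…,t_d], and its image equals R_{d-1}. In particular R_d/I_d ≅ R_{d-1}. -/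
open MvPolynomial

noncomputable section

lemma prodX_eq_monomial (n : ℕ) :
    (∏ i : Fin n, (X i : MvPolynomial (Fin n) ℚ))
      = monomial (Finsupp.equivFunOnFinite.symm (fun _ => 1)) 1 := by
  set s : Fin n →₀ ℕ := Finsupp.equivFunOnFinite.symm (fun _ => 1) with hs
  have hval : ∀ i, s i = 1 := fun i => rfl
  have hsupp : s.support = Finset.univ := by
    ext i; simp [Finsupp.mem_support_iff, hval]
  rw [← prod_X_pow_eq_monomial, hsupp]
  exact Finset.prod_congr rfl fun i _ => by rw [hval, pow_one]

lemma Iset_coeff {n : ℕ} {p : MvPolynomial (Fin n) ℚ} (hp : p ∈ Iset n) {u : Fin n →₀ ℕ}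
    (hu : coeff u p ≠ 0) (i : Fin n) : 1 ≤ u i := by
  obtain ⟨q, rfl⟩ := hp
  rw [prodX_eq_monomial, coeff_monomial_mul'] at hu
  by_cases h : (Finsupp.equivFunOnFinite.symm (fun _ => 1) : Fin n →₀ ℕ) ≤ u
  · exact h i
  · rw [if_neg h] at hu; exact absurd rfl hu

lemma projT_rename_castSucc {n d : ℕ} (β : Fin n → Fin d) (p : MvPolynomial (Fin n) ℚ) :
    projT d (rename (fun i => (β i).castSucc) p) = rename β p := by
  show aeval _ (rename _ p) = _
  rw [aeval_rename]
  have h : ((fun i : Fin (d+1) =>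
      if h : (i : ℕ) < d then (X ⟨i, h⟩ : MvPolynomial (Fin d) ℚ) else 0)
        ∘ fun i => (β i).castSucc) = X ∘ β := by
    funext i
    have hlt : (((β i).castSucc : Fin (d+1)) : ℕ) < d := (β i).isLt
    simp only [Function.comp_apply, dif_pos hlt]
    exact congrArg X (Fin.ext rfl)
  rw [h]
  induction p using MvPolynomial.induction_on <;> simp_all

lemma projT_rename_eq_zero {n d : ℕ} (α : Fin n → Fin (d+1)) (j : Fin n)
    (hj : α j = Fin.last d) {p : MvPolynomial (Fin n) ℚ} (hp : p ∈ Iset n) :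
    projT d (rename α p) = 0 := by
  obtain ⟨q, rfl⟩ := hp
  rw [map_mul, map_mul]
  apply mul_eq_zero_of_left
  rw [map_prod, map_prod]
  apply Finset.prod_eq_zero (Finset.mem_univ j)
  rw [rename_X, hj]
  show aeval _ (X (Fin.last d)) = 0
  rw [aeval_X]
  exact dif_neg (lt_irrefl d)

lemma strInc_eq_id {k : ℕ} (α : StrInc k k) : α.1 = id := by
  have hsurj : Function.Surjective α.1 :=
    Finite.injective_iff_surjective.mp α.2.injective
  have inst : WellFoundedLT (Fin k) := inferInstance
  exact (@StrictMono.range_inj (Fin k) (Fin k) _ _ inst _ _ α.2 strictMono_id).1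
    (by rw [Set.range_id, hsurj.range_eq])

lemma sum_strInc_self {k : ℕ} (p : MvPolynomial (Fin k) ℚ) :
    ∑ α : StrInc k k, rename α.1 p = p := by
  have h1 : ∀ α : StrInc k k, rename α.1 p = p := fun α => by rw [strInc_eq_id α, rename_id, AlgHom.id_apply]
  rw [Finset.sum_congr rfl (fun α _ => h1 α), Finset.sum_const]
  have hcard : Fintype.card (StrInc k k) = 1 :=
    Fintype.card_eq_one_of_forall_eq (i := ⟨id, strictMono_id⟩)
      (fun j => Subtype.ext (strInc_eq_id j))
  rw [Finset.card_univ, hcard, one_smul]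

lemma strInc_isEmpty {k d : ℕ} (h : d < k) : IsEmpty (StrInc k d) := by
  constructor
  intro α
  have := Fintype.card_le_of_injective α.1 α.2.injective
  simp only [Fintype.card_fin] at this
  omega

lemma proj_sum {n d : ℕ} {f : MvPolynomial (Fin n) ℚ} (hf : f ∈ Iset n) :
    ∑ α : StrInc n (d+1), projT d (rename α.1 f) = ∑ β : StrInc n d, rename β.1 f := by
  classical
  rw [← Finset.sum_filter_of_ne
    (p := fun α : StrInc n (d+1) => ∀ i, α.1 i ≠ Fin.last d)
    (fun α _ hne i hi => hne (projT_rename_eq_zero α.1 i hi hf))]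
  refine Finset.sum_bij'
    (i := fun α hα => (⟨fun i => (α.1 i).castPred
        ((Finset.mem_filter.mp hα).2 i), ?_⟩ : StrInc n d))
    (j := fun β _ => (⟨fun i => (β.1 i).castSucc,
        Fin.strictMono_castSucc.comp β.2⟩ : StrInc n (d+1)))
    ?_ ?_ ?_ ?_ ?_
  · intro a b hab
    have h := α.2 hab
    rw [Fin.lt_def, Fin.coe_castPred, Fin.coe_castPred]
    exact h
  · intro α hα; exact Finset.mem_univ _
  · intro β hβ
    refine Finset.mem_filter.mpr ⟨Finset.mem_univ _, fun i => ?_⟩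
    exact ne_of_lt (Fin.castSucc_lt_last _)
  · intro α hα
    apply Subtype.ext; funext i
    exact Fin.castSucc_castPred _ ((Finset.mem_filter.mp hα).2 i)
  · intro β hβ
    apply Subtype.ext; funext i
    exact Fin.castPred_castSucc ((Fin.castSucc_lt_last _).ne)
  · intro α hα
    have hrw : α.1 = fun i => ((α.1 i).castPred ((Finset.mem_filter.mp hα).2 i)).castSucc := by
      funext i; exact (Fin.castSucc_castPred _ _).symm
    conv_lhs => rw [hrw]
    exact projT_rename_castSucc _ f

lemma directness {k d : ℕ} (f : (n : Fin (k+1)) → MvPolynomial (Fin n.1) ℚ)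
    (hf : ∀ n, f n ∈ Iset n.1)
    (hsum : ∑ n : Fin (k+1), ∑ β : StrInc n.1 d, rename β.1 (f n) = 0) :
    ∀ n : Fin (k+1), n.1 ≤ d → f n = 0 := by
  intro n₀ hn₀
  rw [MvPolynomial.eq_zero_iff]
  intro u
  by_contra hu
  set m : Fin d →₀ ℕ := u.mapDomain (Fin.castLE hn₀) with hm
  set β₀ : StrInc n₀.1 d := ⟨Fin.castLE hn₀, Fin.strictMono_castLE hn₀⟩ with hβ₀
  have key : ∀ (n : Fin (k+1)), n ≠ n₀ → ∀ (β : StrInc n.1 d),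
      coeff m (rename β.1 (f n)) = 0 := by
    intro n hne β
    by_contra hc
    obtain ⟨v, hv, hvc⟩ := coeff_rename_ne_zero _ _ _ hc
    have hvfull : v.support = Finset.univ := by
      ext i
      simp only [Finsupp.mem_support_iff, Finset.mem_univ, iff_true]
      exact Nat.one_le_iff_ne_zero.mp (Iset_coeff (hf n) hvc i)
    have hufull : u.support = Finset.univ := by
      ext i
      simp only [Finsupp.mem_support_iff, Finset.mem_univ, iff_true]
      exact Nat.one_le_iff_ne_zero.mp (Iset_coeff (hf n₀) hu i)
    have h1 : m.support = Finset.univ.image β.1 := by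
      rw [← hv, Finsupp.mapDomain_support_of_injective β.2.injective, hvfull]
    have h2 : m.support = Finset.univ.image (Fin.castLE hn₀) := by
      rw [hm, Finsupp.mapDomain_support_of_injective
        (Fin.strictMono_castLE hn₀).injective, hufull]
    have hcard := congrArg Finset.card (h1.symm.trans h2)
    rw [Finset.card_image_of_injective _ β.2.injective,
      Finset.card_image_of_injective _ (Fin.strictMono_castLE hn₀).injective,
      Finset.card_univ, Finset.card_univ, Fintype.card_fin, Fintype.card_fin] at hcard
    exact hne (Fin.ext hcard)
  have keyβ : ∀ β : StrInc n₀.1 d, β ≠ β₀ → coeff m (rename β.1 (f n₀)) = 0 := by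
    intro β hne
    by_contra hc
    obtain ⟨v, hv, hvc⟩ := coeff_rename_ne_zero _ _ _ hc
    have hvfull : v.support = Finset.univ := by
      ext i
      simp only [Finsupp.mem_support_iff, Finset.mem_univ, iff_true]
      exact Nat.one_le_iff_ne_zero.mp (Iset_coeff (hf n₀) hvc i)
    have hufull : u.support = Finset.univ := by
      ext i
      simp only [Finsupp.mem_support_iff, Finset.mem_univ, iff_true]
      exact Nat.one_le_iff_ne_zero.mp (Iset_coeff (hf n₀) hu i)
    have h1 : m.support = Finset.univ.image β.1 := by
      rw [← hv, Finsupp.mapDomain_support_of_injective β.2.injective, hvfull]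
    have h2 : m.support = Finset.univ.image (Fin.castLE hn₀) := by
      rw [hm, Finsupp.mapDomain_support_of_injective
        (Fin.strictMono_castLE hn₀).injective, hufull]
    have hrange : Set.range β.1 = Set.range (Fin.castLE hn₀) := by
      rw [← Set.image_univ, ← Set.image_univ, ← Finset.coe_univ,
        ← Finset.coe_image, ← Finset.coe_image, ← h1, h2]
    have inst : WellFoundedLT (Fin n₀.1) := inferInstance
    have hβ : β.1 = Fin.castLE hn₀ :=
      (@StrictMono.range_inj (Fin n₀.1) (Fin d) _ _ inst _ _ β.2
        (Fin.strictMono_castLE hn₀)).1 hrange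
    exact hne (Subtype.ext hβ)
  have h := congrArg (coeff m) hsum
  rw [coeff_zero] at h
  rw [MvPolynomial.coeff_sum] at h
  rw [Finset.sum_eq_single n₀
      (fun b _ hb => by
        rw [MvPolynomial.coeff_sum]
        exact Finset.sum_eq_zero fun β _ => key b hb β)
      (fun hn => absurd (Finset.mem_univ _) hn)] at h
  rw [MvPolynomial.coeff_sum] at h
  rw [Finset.sum_eq_single β₀
      (fun β _ hβ => keyβ β hβ)
      (fun hn => absurd (Finset.mem_univ _) hn)] at h
  rw [hm, hβ₀] at h
  rw [coeff_rename_mapDomain _ (Fin.strictMono_castLE hn₀).injective] at h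
  exact hu h

def extFam {d : ℕ} (g : (n : Fin (d+1)) → MvPolynomial (Fin n.1) ℚ) :
    (n : Fin (d+2)) → MvPolynomial (Fin n.1) ℚ :=
  fun n => Fin.lastCases (motive := fun i => MvPolynomial (Fin i.1) ℚ) 0 (fun i => g i) n

lemma extFam_castSucc {d : ℕ} (g : (n : Fin (d+1)) → MvPolynomial (Fin n.1) ℚ)
    (i : Fin (d+1)) : extFam g i.castSucc = g i :=
  Fin.lastCases_castSucc (motive := fun i => MvPolynomial (Fin i.1) ℚ) ..

lemma extFam_last {d : ℕ} (g : (n : Fin (d+1)) → MvPolynomial (Fin n.1) ℚ) :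
    extFam g (Fin.last (d+1)) = 0 :=
  Fin.lastCases_last (motive := fun i => MvPolynomial (Fin i.1) ℚ) ..

def lastFam {d : ℕ} (p : MvPolynomial (Fin (d+1)) ℚ) :
    (n : Fin (d+2)) → MvPolynomial (Fin n.1) ℚ :=
  fun n => Fin.lastCases (motive := fun i => MvPolynomial (Fin i.1) ℚ) p (fun _ => 0) n

lemma lastFam_castSucc {d : ℕ} (p : MvPolynomial (Fin (d+1)) ℚ) (i : Fin (d+1)) :
    lastFam p i.castSucc = 0 :=
  Fin.lastCases_castSucc (motive := fun i => MvPolynomial (Fin i.1) ℚ) ..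

lemma lastFam_last {d : ℕ} (p : MvPolynomial (Fin (d+1)) ℚ) :
    lastFam p (Fin.last (d+1)) = p :=
  Fin.lastCases_last (motive := fun i => MvPolynomial (Fin i.1) ℚ) ..

lemma projT_Rsum {d : ℕ} (f : (n : Fin (d+2)) → MvPolynomial (Fin n.1) ℚ)
    (hf : ∀ n, f n ∈ Iset n.1) :
    projT d (∑ n : Fin (d+2), ∑ α : StrInc n.1 (d+1), rename α.1 (f n))
      = ∑ n : Fin (d+2), ∑ β : StrInc n.1 d, rename β.1 (f n) := by
  rw [map_sum]
  refine Finset.sum_congr rfl fun n _ => ?_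
  rw [map_sum]
  exact proj_sum (hf n)

theorem stmt_1 (d : ℕ) :
    {F | F ∈ Rset (d+1) ∧ projT d F = 0} = Iset (d+1) ∧
    (projT d) '' Rset (d+1) = Rset d := by
  constructor
  · ext p
    simp only [Set.mem_setOf_eq]
    constructor
    · rintro ⟨⟨f, hf, rfl⟩, hproj⟩
      rw [projT_Rsum f hf] at hproj
      have h0 := directness f hf hproj
      rw [Fin.sum_univ_castSucc]
      have hz : ∀ i : Fin (d+1),
          (∑ α : StrInc (Fin.castSucc i).1 (d+1), rename α.1 (f (Fin.castSucc i))) = 0 := by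
        intro i
        have hfi : f (Fin.castSucc i) = 0 := h0 _ (Nat.lt_succ_iff.mp i.isLt)
        rw [hfi]
        simp
      rw [Finset.sum_congr rfl (fun i _ => hz i), Finset.sum_const_zero, zero_add]
      show (∑ α : StrInc (d+1) (d+1), rename α.1 (f (Fin.last (d+1)))) ∈ Iset (d+1)
      rw [sum_strInc_self]
      exact hf (Fin.last (d+1))
    · intro hp
      refine ⟨⟨lastFam p, fun n => ?_, ?_⟩, ?_⟩
      · cases n using Fin.lastCases with
        | last => rw [lastFam_last]; exact hp
        | cast i => rw [lastFam_castSucc]; exact ⟨0, (mul_zero _).symm⟩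
      · rw [Fin.sum_univ_castSucc]
        have hz : ∀ i : Fin (d+1),
            (∑ α : StrInc (Fin.castSucc i).1 (d+1),
              rename α.1 (lastFam p (Fin.castSucc i))) = 0 := by
          intro i; rw [lastFam_castSucc]; simp
        rw [Finset.sum_congr rfl (fun i _ => hz i), Finset.sum_const_zero, zero_add,
          lastFam_last]
        exact (sum_strInc_self (k := d+1) p).symm
      · have h0 : projT d (rename id p) = 0 :=
          projT_rename_eq_zero id (Fin.last d) rfl hp
        rwa [rename_id] at h0
  · ext G
    simp only [Set.mem_image]
    constructor
    · rintro ⟨F, ⟨f, hf, rfl⟩, rfl⟩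
      rw [projT_Rsum f hf]
      refine ⟨fun n => f n.castSucc, fun n => hf n.castSucc, ?_⟩
      rw [Fin.sum_univ_castSucc]
      have hlast : (∑ β : StrInc (Fin.last (d+1)).1 d,
          rename β.1 (f (Fin.last (d+1)))) = 0 := by
        haveI : IsEmpty (StrInc (Fin.last (d+1)).1 d) := strInc_isEmpty (by simp)
        rw [Finset.univ_eq_empty, Finset.sum_empty]
      rw [hlast, add_zero]
      rfl
    · rintro ⟨g, hg, rfl⟩
      have hf : ∀ n, extFam g n ∈ Iset n.1 := by
        intro n
        cases n using Fin.lastCases with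
        | last => rw [extFam_last]; exact ⟨0, (mul_zero _).symm⟩
        | cast i => rw [extFam_castSucc]; exact hg i
      refine ⟨∑ n : Fin (d+2), ∑ α : StrInc n.1 (d+1), rename α.1 (extFam g n),
        ⟨extFam g, hf, rfl⟩, ?_⟩
      rw [projT_Rsum _ hf, Fin.sum_univ_castSucc]
      have hlast : (∑ β : StrInc (Fin.last (d+1)).1 d,
          rename β.1 (extFam g (Fin.last (d+1)))) = 0 := by
        rw [extFam_last]; simp
      rw [hlast, add_zero]
      rw [Finset.sum_congr rfl (fun i _ => Finset.sum_congr rfl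
        (fun β _ => by rw [extFam_castSucc]))]
      rfl


end
end

section
/- An element F of R_d uniquely determines its components: if F = Σ_{n=0}^d Σ_{α:[1,n]↪[1,d]} α_* f_n with f_n ∈ I_n, and F = Σ_I a_I t^I is the expansion of F into monomials (multi-index notation, I ∈ ℕ_0^d), then for each 0 ≤ n ≤ d one has f_n = Σ_I a_I t^I where I runs over all tuples (i_1,…,i_d) with i_1,…,i_n > 0 and i_{n+1} = … = i_d = 0. In particular the f_n are uniquely determined by F. -/
open MvPolynomial

noncomputable section

lemma coeff_Iset {n : ℕ} {h : MvPolynomial (Fin n) ℚ} (hh : h ∈ Iset n)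
    {u : Fin n →₀ ℕ} (hu : ¬ ∀ i, 0 < u i) : coeff u h = 0 := by
  obtain ⟨q, rfl⟩ := hh
  push_neg at hu
  obtain ⟨i, hi⟩ := hu
  rw [← Finset.prod_erase_mul _ _ (Finset.mem_univ i), mul_assoc, mul_comm (X i) q,
    ← mul_assoc, coeff_mul_X']
  simp [Finsupp.mem_support_iff, Nat.le_zero.mp hi]

lemma coeff_rename_zero {d n : ℕ} {h : MvPolynomial (Fin n) ℚ} (hh : h ∈ Iset n)
    {α : Fin n → Fin d} (hα : Function.Injective α) {M : Fin d →₀ ℕ}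
    (hM : Finset.univ.image α ≠ M.support) : coeff M (rename α h) = 0 := by
  apply coeff_rename_eq_zero
  intro u hu
  by_contra hc
  have hall : ∀ i, 0 < u i := by
    by_contra h'
    exact hc (coeff_Iset hh h')
  have hsup : u.support = Finset.univ := by
    apply Finset.eq_univ_iff_forall.mpr
    intro i
    exact Finsupp.mem_support_iff.mpr (hall i).ne'
  apply hM
  rw [← hu, Finsupp.mapDomain_support_of_injective hα, hsup]

lemma coeff_formula (d : ℕ) (f : (n : Fin (d+1)) → MvPolynomial (Fin n.1) ℚ)
    (hf : ∀ n, f n ∈ Iset n.1) (n : Fin (d+1)) (m : Fin n.1 →₀ ℕ) :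
    coeff m (f n) =
      if ∀ i, 0 < m i then
        coeff (m.embDomain (Fin.castLEEmb n.is_le))
          (∑ n : Fin (d+1), ∑ α : StrInc n.1 d, rename α.1 (f n)) else 0 := by
  split_ifs with hm
  · set M := m.embDomain (Fin.castLEEmb n.is_le) with hMdef
    have hmsup : m.support = Finset.univ := by
      apply Finset.eq_univ_iff_forall.mpr
      intro i
      exact Finsupp.mem_support_iff.mpr (hm i).ne'
    have hMsupp : M.support = Finset.univ.image (Fin.castLE n.is_le) := by
      rw [hMdef, Finsupp.support_embDomain, hmsup, Finset.map_eq_image]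
      simp
    rw [MvPolynomial.coeff_sum, Finset.sum_eq_single n]
    · rw [MvPolynomial.coeff_sum,
        Finset.sum_eq_single (⟨Fin.castLE n.is_le, Fin.strictMono_castLE _⟩ : StrInc n.1 d)]
      · rw [hMdef, Finsupp.embDomain_eq_mapDomain]
        simp only [Fin.coe_castLEEmb]
        rw [coeff_rename_mapDomain _ (Fin.castLE_injective _)]
      · intro α _ hα
        apply coeff_rename_zero (hf n) α.2.injective
        intro hcontra
        apply hα
        apply Subtype.ext
        apply (StrictMono.range_inj α.2 (Fin.strictMono_castLE n.is_le)).mp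
        rw [← Set.image_univ, ← Set.image_univ, ← Finset.coe_univ, ← Finset.coe_image,
          ← Finset.coe_image, hcontra, hMsupp]
      · intro h; exact absurd (Finset.mem_univ _) h
    · intro n' _ hn'
      rw [MvPolynomial.coeff_sum]
      apply Finset.sum_eq_zero
      intro α _
      apply coeff_rename_zero (hf n') α.2.injective
      intro hcontra
      apply hn'
      apply Fin.ext
      have := congrArg Finset.card hcontra
      rwa [Finset.card_image_of_injective _ α.2.injective, Finset.card_univ, hMsupp,
        Finset.card_image_of_injective _ (Fin.castLE_injective _), Finset.card_univ,
        Fintype.card_fin, Fintype.card_fin] at this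
    · intro h; exact absurd (Finset.mem_univ _) h
  · exact coeff_Iset (hf n) hm


theorem stmt_2 (d : ℕ) (f g : (n : Fin (d+1)) → MvPolynomial (Fin n.1) ℚ)
    (hf : ∀ n, f n ∈ Iset n.1)
    (F : MvPolynomial (Fin d) ℚ)
    (hF : F = ∑ n : Fin (d+1), ∑ α : StrInc n.1 d, rename α.1 (f n)) :
    (∀ (n : Fin (d+1)) (m : Fin n.1 →₀ ℕ),
      coeff m (f n) =
        if ∀ i, 0 < m i then
          coeff (m.embDomain (Fin.castLEEmb n.is_le)) F else 0) ∧
    ((∀ n, g n ∈ Iset n.1) →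
      F = ∑ n : Fin (d+1), ∑ α : StrInc n.1 d, rename α.1 (g n) → g = f) := by
  constructor
  · intro n m
    rw [hF]
    exact coeff_formula d f hf n m
  · intro hg hG
    funext n
    apply MvPolynomial.ext
    intro m
    have h1 := coeff_formula d f hf n m
    have h2 := coeff_formula d g hg n m
    rw [← hF] at h1
    rw [← hG] at h2
    rw [h1, h2]


end
end

section
/- The multiplication on R defined by (f_n)·(g_n) = (h_n), where h_n := Σ_{(α,β)} (α_* f_p)(β_* g_q) with the sum over all pairs of strictly increasing maps α : [1,p] → [1,n], β : [1,q] → [1,n] whose images together cover {1,…,n}, makes R a commutative associative graded ℚ-algebra with unit element 1 ∈ I_0. -/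
open MvPolynomial

noncomputable section
namespace Stmt3Aux

open Finset

lemma strInc_isEmpty {p n : ℕ} (h : n < p) : IsEmpty (StrInc p n) :=
  ⟨fun α => absurd (by simpa using Fintype.card_le_of_injective α.1 α.2.injective) (by omega)⟩

instance strIncUnique0 (n : ℕ) : Unique (StrInc 0 n) where
  default := ⟨Fin.elim0, fun a => a.elim0⟩
  uniq α := Subtype.ext (funext fun j => j.elim0)

lemma strInc_id {n : ℕ} (α : StrInc n n) : α.1 = id := by
  have h1 := Finset.orderEmbOfFin_unique (s := (univ : Finset (Fin n)))
    (Finset.card_fin n) (f := α.1) (fun x => mem_univ (α.1 x)) α.2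
  have h2 := Finset.orderEmbOfFin_unique (s := (univ : Finset (Fin n)))
    (Finset.card_fin n) (f := (id : Fin n → Fin n)) (fun x => mem_univ x) strictMono_id
  rw [h1, ← h2]

instance strIncUniqueId (n : ℕ) : Unique (StrInc n n) where
  default := ⟨id, strictMono_id⟩
  uniq α := Subtype.ext (strInc_id α)

lemma mem_Iset_iff {n : ℕ} {P : MvPolynomial (Fin n) ℚ} :
    P ∈ Iset n ↔ (∏ i, MvPolynomial.X (R := ℚ) i) ∣ P := Iff.rfl

lemma Iset_coeff {n : ℕ} {P : MvPolynomial (Fin n) ℚ} (hP : P ∈ Iset n)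
    {v : Fin n →₀ ℕ} (hv : MvPolynomial.coeff v P ≠ 0) (i : Fin n) : v i ≠ 0 := by
  intro hvi
  obtain ⟨Q, rfl⟩ := hP
  apply hv
  rw [← Finset.mul_prod_erase univ _ (mem_univ i),
    show (MvPolynomial.X i * ∏ k ∈ univ.erase i, MvPolynomial.X k) * Q
      = ((∏ k ∈ univ.erase i, MvPolynomial.X k) * Q) * MvPolynomial.X i by ring,
    MvPolynomial.coeff_mul_X']
  simp [Finsupp.mem_support_iff, hvi]

lemma rename_coeff_zero {p n : ℕ} (α : Fin p → Fin n) (F : MvPolynomial (Fin p) ℚ)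
    {a : Fin n →₀ ℕ} {i : Fin n} (hi : ∀ j, α j ≠ i) (ha : a i ≠ 0) :
    MvPolynomial.coeff a (MvPolynomial.rename α F) = 0 := by
  apply MvPolynomial.coeff_rename_eq_zero
  intro u hu
  exfalso
  apply ha
  rw [← hu]
  exact Finsupp.mapDomain_notin_range u i (by rintro ⟨j, rfl⟩; exact hi j rfl)

open MvPolynomial in
/-- Projection onto the span of full-support monomials. -/
def pi (n : ℕ) (P : MvPolynomial (Fin n) ℚ) : MvPolynomial (Fin n) ℚ :=
  ∑ u ∈ P.support, if (∀ i, u i ≠ 0) then monomial u (coeff u P) else 0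

open MvPolynomial in
lemma coeff_pi (n : ℕ) (P : MvPolynomial (Fin n) ℚ) (v : Fin n →₀ ℕ) :
    coeff v (pi n P) = if (∀ i, v i ≠ 0) then coeff v P else 0 := by
  classical
  rw [pi, coeff_sum]
  rw [Finset.sum_eq_single v]
  · split_ifs with h
    · simp [coeff_monomial]
    · simp
  · intro u _ hne
    split_ifs with h
    · simp [coeff_monomial, hne]
    · simp
  · intro hv
    rw [notMem_support_iff] at hv
    split_ifs <;> simp [hv, coeff_monomial]

open MvPolynomial in
lemma pi_add (n : ℕ) (P Q : MvPolynomial (Fin n) ℚ) :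
    pi n (P + Q) = pi n P + pi n Q := by
  ext v
  rw [coeff_add, coeff_pi, coeff_pi, coeff_pi]
  split_ifs <;> simp [coeff_add]

lemma pi_zero (n : ℕ) : pi n 0 = 0 := by
  ext v; rw [coeff_pi]; split_ifs <;> simp

/-- `pi` as an additive monoid hom. -/
def piHom (n : ℕ) : MvPolynomial (Fin n) ℚ →+ MvPolynomial (Fin n) ℚ where
  toFun := pi n
  map_zero' := pi_zero n
  map_add' := pi_add n

open MvPolynomial in
lemma pi_eq_self {n : ℕ} {P : MvPolynomial (Fin n) ℚ} (hP : P ∈ Iset n) : pi n P = P := by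
  ext v
  rw [coeff_pi]
  split_ifs with h
  · rfl
  · by_contra h'
    exact h fun i => Iset_coeff hP (fun h0 => h' h0.symm) i

open MvPolynomial in
lemma pi_mul_eq_zero {p q n : ℕ} (α : Fin p → Fin n) (β : Fin q → Fin n)
    (F : MvPolynomial (Fin p) ℚ) (G : MvPolynomial (Fin q) ℚ) {i : Fin n}
    (hα : ∀ j, α j ≠ i) (hβ : ∀ j, β j ≠ i) :
    pi n (rename α F * rename β G) = 0 := by
  ext v
  rw [coeff_pi]
  split_ifs with h
  · rw [coeff_mul, coeff_zero]
    apply Finset.sum_eq_zero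
    rintro ⟨a, b⟩ hab
    rw [HasAntidiagonal.mem_antidiagonal] at hab
    have hv : a i + b i ≠ 0 := by rw [← Finsupp.add_apply, hab]; exact h i
    rcases Nat.eq_zero_or_pos (a i) with h0 | h0
    · rw [rename_coeff_zero β G (a := b) hβ (show b i ≠ 0 by omega), mul_zero]
    · rw [rename_coeff_zero α F (a := a) hα (show a i ≠ 0 by omega), zero_mul]
  · simp

/-- The increasing enumeration of a finset, as a `StrInc`. -/
def embSet {n : ℕ} (S : Finset (Fin n)) : StrInc S.card n :=
  ⟨fun i => S.orderEmbOfFin rfl i, (S.orderEmbOfFin rfl).strictMono⟩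

/-- Index map: the inverse of the enumeration along `α`. -/
def idxMap {p n : ℕ} (S : Finset (Fin n)) (α : Fin p → Fin n) (hα : StrictMono α)
    (h : ∀ j, α j ∈ S) : StrInc p S.card :=
  ⟨fun j => (S.orderIsoOfFin rfl).symm ⟨α j, h j⟩,
   fun a b hab => (S.orderIsoOfFin rfl).symm.strictMono (Subtype.mk_lt_mk.2 (hα hab))⟩

lemma embSet_idx {p n : ℕ} (S : Finset (Fin n)) (α : Fin p → Fin n) (hα : StrictMono α)
    (h : ∀ j, α j ∈ S) (j : Fin p) :
    (embSet S).1 ((idxMap S α hα h).1 j) = α j := by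
  show (S.orderEmbOfFin rfl) ((S.orderIsoOfFin rfl).symm ⟨α j, h j⟩) = α j
  rw [← Finset.coe_orderIsoOfFin_apply, OrderIso.apply_symm_apply]

lemma embSet_eq_of {n : ℕ} (S : Finset (Fin n)) (δ : StrInc S.card n)
    (hmem : ∀ x, δ.1 x ∈ S) : embSet S = δ :=
  Subtype.ext ((Finset.orderEmbOfFin_unique rfl hmem δ.2).symm)

lemma idxMap_apply_eq {p n : ℕ} (S : Finset (Fin n)) (α : Fin p → Fin n) (hα : StrictMono α)
    (h : ∀ j, α j ∈ S) (j : Fin p) (i : Fin S.card)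
    (hji : α j = ((S.orderIsoOfFin rfl) i).1) : (idxMap S α hα h).1 j = i := by
  show (S.orderIsoOfFin rfl).symm ⟨α j, h j⟩ = i
  rw [OrderIso.symm_apply_eq]
  exact Subtype.ext hji

lemma covers_union {p q n : ℕ} {α : StrInc p n} {β : StrInc q n} (cov : Covers α β) :
    univ.image α.1 ∪ univ.image β.1 = univ := by
  refine Finset.eq_univ_iff_forall.mpr fun i => ?_
  rcases cov i with ⟨j, hj⟩ | ⟨j, hj⟩
  · exact mem_union_left _ (hj ▸ mem_image_of_mem _ (mem_univ j))
  · exact mem_union_right _ (hj ▸ mem_image_of_mem _ (mem_univ j))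

/-- The index type for the master bijection. -/
abbrev Idx (n p q : ℕ) : Type := Σ m : Fin (n+1), StrInc m.1 n × StrInc p m.1 × StrInc q m.1

def toPair {n p q : ℕ} (x : Idx n p q) : StrInc p n × StrInc q n :=
  (⟨x.2.1.1 ∘ x.2.2.1.1, x.2.1.2.comp x.2.2.1.2⟩,
   ⟨x.2.1.1 ∘ x.2.2.2.1, x.2.1.2.comp x.2.2.2.2⟩)

def pairSet {n p q : ℕ} (y : StrInc p n × StrInc q n) : Finset (Fin n) :=
  univ.image y.1.1 ∪ univ.image y.2.1

def toSig {n p q : ℕ} (y : StrInc p n × StrInc q n) : Idx n p q :=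
  ⟨⟨(pairSet y).card, Nat.lt_succ_of_le (le_trans (Finset.card_le_univ _)
      (le_of_eq (Finset.card_fin n)))⟩,
   embSet (pairSet y),
   idxMap (pairSet y) y.1.1 y.1.2 (fun j => mem_union_left _ (mem_image_of_mem _ (mem_univ j))),
   idxMap (pairSet y) y.2.1 y.2.2 (fun j => mem_union_right _ (mem_image_of_mem _ (mem_univ j)))⟩

lemma toPair_toSig {n p q : ℕ} (y : StrInc p n × StrInc q n) : toPair (toSig y) = y := by
  refine Prod.ext (Subtype.ext (funext fun j => ?_)) (Subtype.ext (funext fun j => ?_))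
  · exact embSet_idx _ _ y.1.2 _ j
  · exact embSet_idx _ _ y.2.2 _ j

lemma toSig_covers {n p q : ℕ} (y : StrInc p n × StrInc q n) :
    Covers (toSig y).2.2.1 (toSig y).2.2.2 := by
  intro i
  have hm : (((pairSet y).orderIsoOfFin rfl) i).1 ∈ pairSet y := (((pairSet y).orderIsoOfFin rfl) i).2
  rcases mem_union.mp hm with hm | hm
  · obtain ⟨j, -, hj⟩ := mem_image.mp hm
    exact Or.inl ⟨j, idxMap_apply_eq (pairSet y) _ y.1.2 _ j i hj⟩
  · obtain ⟨j, -, hj⟩ := mem_image.mp hm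
    exact Or.inr ⟨j, idxMap_apply_eq (pairSet y) _ y.2.2 _ j i hj⟩

lemma idx_eq {n p q : ℕ} {m m' : ℕ} {hm : m < n+1} {hm' : m' < n+1}
    {δ : StrInc m n} {δ' : StrInc m' n} {a : StrInc p m} {a' : StrInc p m'}
    {b : StrInc q m} {b' : StrInc q m'} (h : m = m')
    (hδ : ∀ i : Fin m, δ.1 i = δ'.1 (Fin.cast h i))
    (ha : ∀ j, ((a.1 j : Fin m) : ℕ) = ((a'.1 j : Fin m') : ℕ))
    (hb : ∀ j, ((b.1 j : Fin m) : ℕ) = ((b'.1 j : Fin m') : ℕ)) :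
    (⟨⟨m, hm⟩, δ, a, b⟩ : Idx n p q) = ⟨⟨m', hm'⟩, δ', a', b'⟩ := by
  subst h
  refine Sigma.ext rfl (heq_of_eq ?_)
  refine Prod.ext (Subtype.ext (funext fun i => ?_))
    (Prod.ext (Subtype.ext (funext fun j => Fin.ext (ha j)))
      (Subtype.ext (funext fun j => Fin.ext (hb j))))
  exact hδ i

lemma toSig_toPair {n p q : ℕ} (x : Idx n p q) (cov : Covers x.2.2.1 x.2.2.2) :
    toSig (toPair x) = x := by
  obtain ⟨⟨m, hm⟩, δ, α', β'⟩ := x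
  set y := toPair (⟨⟨m, hm⟩, δ, α', β'⟩ : Idx n p q) with hy
  have hU : pairSet y = univ.image δ.1 := by
    show univ.image (δ.1 ∘ α'.1) ∪ univ.image (δ.1 ∘ β'.1) = univ.image δ.1
    rw [← Finset.image_image, ← Finset.image_image (g := δ.1), ← Finset.image_union,
      covers_union cov]
  have hcard : (pairSet y).card = m := by
    rw [hU, Finset.card_image_of_injective _ δ.2.injective, card_univ, Fintype.card_fin]
  have hδp : ∀ i : Fin (pairSet y).card, (embSet (pairSet y)).1 i = δ.1 (Fin.cast hcard i) := by
    have hsm : StrictMono (fun i : Fin (pairSet y).card => δ.1 (Fin.cast hcard i)) := by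
      intro i j hij
      exact δ.2 hij
    have hUmem : ∀ z, z ∈ univ.image δ.1 → z ∈ pairSet y := fun z hz => by
      rw [hU]; exact hz
    have hmem : ∀ i : Fin (pairSet y).card, δ.1 (Fin.cast hcard i) ∈ pairSet y :=
      fun i => hUmem _ (mem_image_of_mem _ (mem_univ _))
    have := Finset.orderEmbOfFin_unique (s := pairSet y) rfl hmem hsm
    intro i
    exact (congrFun this i).symm
  have key : ∀ {r : ℕ} (γ : StrInc r m) (hmem : ∀ j, (δ.1 ∘ γ.1) j ∈ pairSet y) (j : Fin r),
      (((idxMap (pairSet y) (δ.1 ∘ γ.1) (δ.2.comp γ.2) hmem).1 j : Fin (pairSet y).card) : ℕ)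
        = ((γ.1 j : Fin m) : ℕ) := by
    intro r γ hmem j
    set k := (idxMap (pairSet y) (δ.1 ∘ γ.1) (δ.2.comp γ.2) hmem).1 j with hk
    have h1 : (embSet (pairSet y)).1 k = δ.1 (γ.1 j) := embSet_idx _ _ _ _ j
    have h2 : δ.1 (Fin.cast hcard k) = δ.1 (γ.1 j) := by rw [← hδp k]; exact h1
    have h3 := δ.2.injective h2
    exact congrArg Fin.val h3
  exact idx_eq hcard hδp (key α' _) (key β' _)

/-- The master reindexing lemma. -/
lemma master {M : Type*} [AddCommMonoid M] (n p q : ℕ)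
    (t : (Fin p → Fin n) → (Fin q → Fin n) → M) :
    (∑ m : Fin (n+1), ∑ δ : StrInc m.1 n, ∑ α : StrInc p m.1, ∑ β : StrInc q m.1,
      if Covers α β then t (δ.1 ∘ α.1) (δ.1 ∘ β.1) else 0)
    = ∑ α : StrInc p n, ∑ β : StrInc q n, t α.1 β.1 := by
  classical
  have h1 : (∑ m : Fin (n+1), ∑ δ : StrInc m.1 n, ∑ α : StrInc p m.1, ∑ β : StrInc q m.1,
      if Covers α β then t (δ.1 ∘ α.1) (δ.1 ∘ β.1) else 0)
      = ∑ x : Idx n p q, if Covers x.2.2.1 x.2.2.2 then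
          t (x.2.1.1 ∘ x.2.2.1.1) (x.2.1.1 ∘ x.2.2.2.1) else 0 := by
    rw [← Finset.univ_sigma_univ, Finset.sum_sigma]
    refine Finset.sum_congr rfl fun m _ => ?_
    rw [Fintype.sum_prod_type]
    refine Finset.sum_congr rfl fun δ _ => ?_
    rw [Fintype.sum_prod_type]
  have h2 : (∑ α : StrInc p n, ∑ β : StrInc q n, t α.1 β.1)
      = ∑ y : StrInc p n × StrInc q n, t y.1.1 y.2.1 := by
    rw [Fintype.sum_prod_type]
  rw [h1, h2, ← Finset.sum_filter]
  refine Finset.sum_nbij' (fun x => toPair x) (fun y => toSig y) ?_ ?_ ?_ ?_ ?_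
  · intro x _; exact Finset.mem_univ _
  · intro y _
    rw [Finset.mem_filter]
    exact ⟨Finset.mem_univ _, toSig_covers y⟩
  · intro x hx
    exact toSig_toPair x (Finset.mem_filter.mp hx).2
  · intro y _
    exact toPair_toSig y
  · intro x _; rfl

lemma sum_strInc_empty {M : Type*} [AddCommMonoid M] {p m : ℕ} (h : m < p)
    (F : StrInc p m → M) : ∑ α : StrInc p m, F α = 0 := by
  haveI := strInc_isEmpty h
  rw [Finset.univ_eq_empty, Finset.sum_empty]

lemma sum_fin_extend {M : Type*} [AddCommMonoid M] {a b : ℕ} (hab : a ≤ b) (F : ℕ → M)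
    (h0 : ∀ k, a < k → F k = 0) : (∑ p : Fin (a+1), F p.1) = ∑ p : Fin (b+1), F p.1 := by
  rw [Fin.sum_univ_eq_sum_range (fun k => F k), Fin.sum_univ_eq_sum_range (fun k => F k)]
  refine Finset.sum_subset ?_ ?_
  · intro x hx
    rw [Finset.mem_range] at hx ⊢
    omega
  · intro x _ hx
    rw [Finset.mem_range] at hx
    exact h0 x (by omega)

open MvPolynomial in
lemma theta_mul (n : ℕ) (f g : Rbig) : theta n (mulR f g) = theta n f * theta n g := by
  rw [theta, theta, theta, Finset.sum_mul_sum]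
  have hR : ∀ p q : Fin (n+1),
      (∑ α : StrInc p.1 n, rename α.1 (f p.1)) * (∑ β : StrInc q.1 n, rename β.1 (g q.1))
      = ∑ α : StrInc p.1 n, ∑ β : StrInc q.1 n, rename α.1 (f p.1) * rename β.1 (g q.1) :=
    fun p q => Finset.sum_mul_sum _ _ _ _
  calc
    ∑ m : Fin (n+1), ∑ δ : StrInc m.1 n, rename δ.1 ((mulR f g) m.1)
      = ∑ m : Fin (n+1), ∑ δ : StrInc m.1 n, ∑ p : Fin (m.1+1), ∑ q : Fin (m.1+1),
          ∑ α : StrInc p.1 m.1, ∑ β : StrInc q.1 m.1,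
            if Covers α β then rename (δ.1 ∘ α.1) (f p.1) * rename (δ.1 ∘ β.1) (g q.1)
            else 0 := by
        refine Finset.sum_congr rfl fun m _ => Finset.sum_congr rfl fun δ _ => ?_
        rw [show (mulR f g) m.1 = ∑ p : Fin (m.1+1), ∑ q : Fin (m.1+1),
          ∑ α : StrInc p.1 m.1, ∑ β : StrInc q.1 m.1,
            if Covers α β then rename α.1 (f p.1) * rename β.1 (g q.1) else 0 from rfl]
        rw [map_sum]
        refine Finset.sum_congr rfl fun p _ => ?_
        rw [map_sum]
        refine Finset.sum_congr rfl fun q _ => ?_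
        rw [map_sum]
        refine Finset.sum_congr rfl fun α _ => ?_
        rw [map_sum]
        refine Finset.sum_congr rfl fun β _ => ?_
        rw [apply_ite (rename δ.1), map_mul, rename_rename, rename_rename, map_zero]
    _ = ∑ m : Fin (n+1), ∑ δ : StrInc m.1 n, ∑ p : Fin (n+1), ∑ q : Fin (n+1),
          ∑ α : StrInc p.1 m.1, ∑ β : StrInc q.1 m.1,
            if Covers α β then rename (δ.1 ∘ α.1) (f p.1) * rename (δ.1 ∘ β.1) (g q.1)
            else 0 := by
        refine Finset.sum_congr rfl fun m _ => Finset.sum_congr rfl fun δ _ => ?_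
        have hm : m.1 ≤ n := Nat.lt_succ_iff.mp m.2
        calc
          (∑ p : Fin (m.1+1), ∑ q : Fin (m.1+1), ∑ α : StrInc p.1 m.1, ∑ β : StrInc q.1 m.1,
            if Covers α β then rename (δ.1 ∘ α.1) (f p.1) * rename (δ.1 ∘ β.1) (g q.1) else 0)
            = ∑ p : Fin (m.1+1), ∑ q : Fin (n+1), ∑ α : StrInc p.1 m.1, ∑ β : StrInc q.1 m.1,
              if Covers α β then rename (δ.1 ∘ α.1) (f p.1) * rename (δ.1 ∘ β.1) (g q.1)
              else 0 := by
              refine Finset.sum_congr rfl fun p _ => ?_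
              refine sum_fin_extend hm (fun k => ∑ α : StrInc p.1 m.1, ∑ β : StrInc k m.1,
                if Covers α β then rename (δ.1 ∘ α.1) (f p.1) * rename (δ.1 ∘ β.1) (g k)
                else 0) (fun k hk => ?_)
              refine Finset.sum_eq_zero fun α _ => ?_
              exact sum_strInc_empty hk _
          _ = ∑ p : Fin (n+1), ∑ q : Fin (n+1), ∑ α : StrInc p.1 m.1, ∑ β : StrInc q.1 m.1,
              if Covers α β then rename (δ.1 ∘ α.1) (f p.1) * rename (δ.1 ∘ β.1) (g q.1)
              else 0 := by
              refine sum_fin_extend hm (fun k => ∑ q : Fin (n+1), ∑ α : StrInc k m.1,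
                ∑ β : StrInc q.1 m.1,
                if Covers α β then rename (δ.1 ∘ α.1) (f k) * rename (δ.1 ∘ β.1) (g q.1)
                else 0) (fun k hk => ?_)
              refine Finset.sum_eq_zero fun q _ => ?_
              exact sum_strInc_empty hk _
    _ = ∑ p : Fin (n+1), ∑ q : Fin (n+1), ∑ m : Fin (n+1), ∑ δ : StrInc m.1 n,
          ∑ α : StrInc p.1 m.1, ∑ β : StrInc q.1 m.1,
            if Covers α β then rename (δ.1 ∘ α.1) (f p.1) * rename (δ.1 ∘ β.1) (g q.1)
            else 0 := by
        calc
          (∑ m : Fin (n+1), ∑ δ : StrInc m.1 n, ∑ p : Fin (n+1), ∑ q : Fin (n+1),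
            ∑ α : StrInc p.1 m.1, ∑ β : StrInc q.1 m.1,
              if Covers α β then rename (δ.1 ∘ α.1) (f p.1) * rename (δ.1 ∘ β.1) (g q.1) else 0)
            = ∑ m : Fin (n+1), ∑ p : Fin (n+1), ∑ q : Fin (n+1), ∑ δ : StrInc m.1 n,
              ∑ α : StrInc p.1 m.1, ∑ β : StrInc q.1 m.1,
                if Covers α β then rename (δ.1 ∘ α.1) (f p.1) * rename (δ.1 ∘ β.1) (g q.1)
                else 0 := by
              refine Finset.sum_congr rfl fun m _ => ?_
              rw [Finset.sum_comm]
              exact Finset.sum_congr rfl fun p _ => Finset.sum_comm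
          _ = ∑ p : Fin (n+1), ∑ q : Fin (n+1), ∑ m : Fin (n+1), ∑ δ : StrInc m.1 n,
              ∑ α : StrInc p.1 m.1, ∑ β : StrInc q.1 m.1,
                if Covers α β then rename (δ.1 ∘ α.1) (f p.1) * rename (δ.1 ∘ β.1) (g q.1)
                else 0 := by
              rw [Finset.sum_comm]
              exact Finset.sum_congr rfl fun p _ => Finset.sum_comm
    _ = ∑ p : Fin (n+1), ∑ q : Fin (n+1),
          (∑ α : StrInc p.1 n, rename α.1 (f p.1)) * (∑ β : StrInc q.1 n, rename β.1 (g q.1)) := by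
        refine Finset.sum_congr rfl fun p _ => Finset.sum_congr rfl fun q _ => ?_
        rw [hR p q]
        exact master n p.1 q.1 (fun u v => rename u (f p.1) * rename v (g q.1))

lemma pi_sum {n : ℕ} {ι : Type*} (s : Finset ι) (F : ι → MvPolynomial (Fin n) ℚ) :
    pi n (∑ i ∈ s, F i) = ∑ i ∈ s, pi n (F i) :=
  map_sum (piHom n) F s

open MvPolynomial in
lemma cov_term_mem {p q n : ℕ} {α : StrInc p n} {β : StrInc q n} (cov : Covers α β)
    {F : MvPolynomial (Fin p) ℚ} {G : MvPolynomial (Fin q) ℚ}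
    (hF : F ∈ Iset p) (hG : G ∈ Iset q) :
    rename α.1 F * rename β.1 G ∈ Iset n := by
  obtain ⟨F', rfl⟩ := hF
  obtain ⟨G', rfl⟩ := hG
  rw [map_mul, map_mul, mem_Iset_iff]
  have hα2 : (∏ i ∈ univ.image α.1, X (R := ℚ) i) = ∏ j : Fin p, X (α.1 j) :=
    Finset.prod_image (fun x _ y _ h => α.2.injective h)
  have hβ2 : (∏ i ∈ univ.image β.1, X (R := ℚ) i) = ∏ j : Fin q, X (β.1 j) :=
    Finset.prod_image (fun x _ y _ h => β.2.injective h)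
  have hrα : rename α.1 (∏ i : Fin p, X (R := ℚ) i) = ∏ i ∈ univ.image α.1, X i := by
    rw [map_prod, hα2]
    simp only [rename_X]
  have hrβ : rename β.1 (∏ i : Fin q, X (R := ℚ) i) = ∏ i ∈ univ.image β.1, X i := by
    rw [map_prod, hβ2]
    simp only [rename_X]
  rw [hrα, hrβ]
  have hdvd : (∏ i : Fin n, X (R := ℚ) i) ∣
      (∏ i ∈ univ.image α.1, X (R := ℚ) i) * ∏ i ∈ univ.image β.1, X (R := ℚ) i := by
    rw [← Finset.prod_union_inter, covers_union cov]
    exact Dvd.intro _ rfl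
  have : (∏ i ∈ univ.image α.1, X (R := ℚ) i) * rename α.1 F' *
      ((∏ i ∈ univ.image β.1, X (R := ℚ) i) * rename β.1 G')
      = ((∏ i ∈ univ.image α.1, X (R := ℚ) i) * ∏ i ∈ univ.image β.1, X (R := ℚ) i) *
        (rename α.1 F' * rename β.1 G') := by ring
  rw [this]
  exact hdvd.mul_right _

open MvPolynomial in
lemma mulR_eq_pi (n : ℕ) (f g : Rbig) (hf : ∀ k, f k ∈ Iset k) (hg : ∀ k, g k ∈ Iset k) :
    (mulR f g) n = pi n (theta n f * theta n g) := by
  rw [theta, theta, Finset.sum_mul_sum, pi_sum]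
  show (∑ p : Fin (n+1), ∑ q : Fin (n+1), ∑ α : StrInc p.1 n, ∑ β : StrInc q.1 n,
    if Covers α β then rename α.1 (f p.1) * rename β.1 (g q.1) else 0) = _
  refine Finset.sum_congr rfl fun p _ => ?_
  rw [pi_sum]
  refine Finset.sum_congr rfl fun q _ => ?_
  rw [Finset.sum_mul_sum, pi_sum]
  refine Finset.sum_congr rfl fun α _ => ?_
  rw [pi_sum]
  refine Finset.sum_congr rfl fun β _ => ?_
  split_ifs with hc
  · exact (pi_eq_self (cov_term_mem hc (hf p.1) (hg q.1))).symm
  · rw [Covers, not_forall] at hc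
    obtain ⟨i, hi⟩ := hc
    rw [not_or] at hi
    obtain ⟨h1, h2⟩ := hi
    rw [not_exists] at h1 h2
    exact (pi_mul_eq_zero α.1 β.1 _ _ h1 h2).symm

open MvPolynomial in
lemma pi_rename_eq_zero {p n : ℕ} (α : Fin p → Fin n) (F : MvPolynomial (Fin p) ℚ)
    {i : Fin n} (hα : ∀ j, α j ≠ i) : pi n (rename α F) = 0 := by
  ext v
  rw [coeff_pi]
  split_ifs with h
  · rw [coeff_zero]
    exact rename_coeff_zero α F hα (h i)
  · simp

open MvPolynomial in
lemma pi_theta (n : ℕ) (f : Rbig) (hf : ∀ k, f k ∈ Iset k) : pi n (theta n f) = f n := by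
  rw [theta, pi_sum]
  rw [Finset.sum_eq_single (⟨n, Nat.lt_succ_self n⟩ : Fin (n+1))]
  · rw [pi_sum, Finset.sum_eq_single (default : StrInc n n)]
    · rw [show (default : StrInc n n).1 = id from rfl, rename_id]
      exact pi_eq_self (hf n)
    · intro α _ hα
      exact absurd (Unique.uniq _ α) hα
    · intro h
      exact absurd (Finset.mem_univ _) h
  · intro b _ hb
    have hbn : b.1 < n := lt_of_le_of_ne (Nat.lt_succ_iff.mp b.2) (fun h => hb (Fin.ext h))
    rw [pi_sum]
    refine Finset.sum_eq_zero fun α _ => ?_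
    have hex : ∃ i : Fin n, ∀ j, α.1 j ≠ i := by
      by_contra h
      push_neg at h
      have hsur : Function.Surjective α.1 := fun i => h i
      have := Fintype.card_le_of_surjective α.1 hsur
      simp only [Fintype.card_fin] at this
      omega
    obtain ⟨i, hi⟩ := hex
    exact pi_rename_eq_zero α.1 (f b.1) hi
  · intro h
    exact absurd (Finset.mem_univ _) h

lemma sing_zero_apply : sing 0 1 0 = 1 := rfl

lemma sing_zero_apply_ne {k : ℕ} (hk : k ≠ 0) : sing 0 1 k = 0 := dif_neg hk

open MvPolynomial in
lemma theta_sing (n : ℕ) : theta n (sing 0 1) = 1 := by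
  rw [theta, Finset.sum_eq_single (⟨0, Nat.succ_pos n⟩ : Fin (n+1))]
  · calc (∑ α : StrInc 0 n, rename α.1 (sing 0 1 0))
        = ∑ _α : StrInc 0 n, (1 : MvPolynomial (Fin n) ℚ) :=
          Finset.sum_congr rfl fun α _ => by rw [sing_zero_apply, map_one]
      _ = 1 := by simp
  · intro b _ hb
    have : b.1 ≠ 0 := fun h => hb (Fin.ext h)
    rw [sing_zero_apply_ne this]
    simp
  · intro h
    exact absurd (Finset.mem_univ _) h

lemma mulR_mem_Iset {f g : Rbig} (hf : ∀ k, f k ∈ Iset k) (hg : ∀ k, g k ∈ Iset k) (n : ℕ) :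
    (mulR f g) n ∈ Iset n := by
  rw [mem_Iset_iff]
  refine Finset.dvd_sum fun p _ => Finset.dvd_sum fun q _ => Finset.dvd_sum fun α _ =>
    Finset.dvd_sum fun β _ => ?_
  split_ifs with hc
  · exact mem_Iset_iff.mp (cov_term_mem hc (hf p.1) (hg q.1))
  · exact dvd_zero _

lemma covers_le {p q n : ℕ} {α : StrInc p n} {β : StrInc q n} (cov : Covers α β) :
    n ≤ p + q := by
  have h := covers_union cov
  have hcard : (univ : Finset (Fin n)).card ≤ (univ.image α.1).card + (univ.image β.1).card := by
    rw [← h]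
    exact Finset.card_union_le _ _
  have h1 : (univ.image α.1).card ≤ p := le_trans Finset.card_image_le (by simp)
  have h2 : (univ.image β.1).card ≤ q := le_trans Finset.card_image_le (by simp)
  have h3 : (univ : Finset (Fin n)).card = n := by simp
  omega

lemma mulR_vanish {f g : Rbig} {Nf Ng : ℕ} (hNf : ∀ k, Nf < k → f k = 0)
    (hNg : ∀ k, Ng < k → g k = 0) {n : ℕ} (hn : Nf + Ng < n) : (mulR f g) n = 0 := by
  refine Finset.sum_eq_zero fun p _ => Finset.sum_eq_zero fun q _ =>
    Finset.sum_eq_zero fun α _ => Finset.sum_eq_zero fun β _ => ?_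
  split_ifs with hc
  · have hle := covers_le hc
    rcases Nat.lt_or_ge Nf p.1 with h | h
    · rw [hNf _ h, map_zero, zero_mul]
    · rw [hNg _ (by omega), map_zero, mul_zero]
  · rfl

lemma sing_mem : sing 0 1 ∈ RsetAll := by
  constructor
  · intro n
    rcases Nat.eq_zero_or_pos n with rfl | hn
    · rw [sing_zero_apply]
      exact ⟨1, by simp⟩
    · rw [sing_zero_apply_ne (by omega)]
      exact ⟨0, (mul_zero _).symm⟩
  · refine Set.Finite.subset (Set.finite_singleton 0) fun n hn => ?_
    by_contra h
    exact hn (sing_zero_apply_ne (by simpa using h))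

lemma bound_of_mem {f : Rbig} (hf : f ∈ RsetAll) : ∃ N, ∀ k, N < k → f k = 0 := by
  obtain ⟨N, hN⟩ := hf.2.bddAbove
  refine ⟨N, fun k hk => ?_⟩
  by_contra h
  exact absurd (hN (Set.mem_setOf.mpr h)) (by omega)

lemma mulR_mem {f g : Rbig} (hf : f ∈ RsetAll) (hg : g ∈ RsetAll) : mulR f g ∈ RsetAll := by
  refine ⟨mulR_mem_Iset hf.1 hg.1, ?_⟩
  obtain ⟨Nf, hNf⟩ := bound_of_mem hf
  obtain ⟨Ng, hNg⟩ := bound_of_mem hg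
  refine Set.Finite.subset (Set.finite_Iic (Nf + Ng)) fun n hn => ?_
  rw [Set.mem_Iic]
  by_contra h
  exact hn (mulR_vanish hNf hNg (by omega))

lemma mulR_comm {f g : Rbig} (hf : f ∈ RsetAll) (hg : g ∈ RsetAll) : mulR f g = mulR g f := by
  funext n
  rw [mulR_eq_pi n f g hf.1 hg.1, mulR_eq_pi n g f hg.1 hf.1, mul_comm]

lemma mulR_assoc {f g h : Rbig} (hf : f ∈ RsetAll) (hg : g ∈ RsetAll) (hh : h ∈ RsetAll) :
    mulR (mulR f g) h = mulR f (mulR g h) := by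
  have hfg := mulR_mem hf hg
  have hgh := mulR_mem hg hh
  funext n
  rw [mulR_eq_pi n (mulR f g) h hfg.1 hh.1, mulR_eq_pi n f (mulR g h) hf.1 hgh.1,
    theta_mul, theta_mul, mul_assoc]

lemma mulR_one_left {f : Rbig} (hf : f ∈ RsetAll) : mulR (sing 0 1) f = f := by
  funext n
  rw [mulR_eq_pi n (sing 0 1) f sing_mem.1 hf.1, theta_sing, one_mul, pi_theta n f hf.1]

open MvPolynomial in
lemma mulR_add_left (f g h : Rbig) : mulR (f + g) h = mulR f h + mulR g h := by
  funext n
  show (∑ p : Fin (n+1), ∑ q : Fin (n+1), ∑ α : StrInc p.1 n, ∑ β : StrInc q.1 n,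
      if Covers α β then rename α.1 ((f + g) p.1) * rename β.1 (h q.1) else 0)
    = (∑ p : Fin (n+1), ∑ q : Fin (n+1), ∑ α : StrInc p.1 n, ∑ β : StrInc q.1 n,
        if Covers α β then rename α.1 (f p.1) * rename β.1 (h q.1) else 0)
      + ∑ p : Fin (n+1), ∑ q : Fin (n+1), ∑ α : StrInc p.1 n, ∑ β : StrInc q.1 n,
        if Covers α β then rename α.1 (g p.1) * rename β.1 (h q.1) else 0
  simp only [← Finset.sum_add_distrib]
  refine Finset.sum_congr rfl fun p _ => Finset.sum_congr rfl fun q _ =>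
    Finset.sum_congr rfl fun α _ => Finset.sum_congr rfl fun β _ => ?_
  split_ifs with hc
  · rw [Pi.add_apply, map_add, add_mul]
  · rw [add_zero]

open MvPolynomial in
lemma mulR_add_right (f g h : Rbig) : mulR f (g + h) = mulR f g + mulR f h := by
  funext n
  show (∑ p : Fin (n+1), ∑ q : Fin (n+1), ∑ α : StrInc p.1 n, ∑ β : StrInc q.1 n,
      if Covers α β then rename α.1 (f p.1) * rename β.1 ((g + h) q.1) else 0)
    = (∑ p : Fin (n+1), ∑ q : Fin (n+1), ∑ α : StrInc p.1 n, ∑ β : StrInc q.1 n,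
        if Covers α β then rename α.1 (f p.1) * rename β.1 (g q.1) else 0)
      + ∑ p : Fin (n+1), ∑ q : Fin (n+1), ∑ α : StrInc p.1 n, ∑ β : StrInc q.1 n,
        if Covers α β then rename α.1 (f p.1) * rename β.1 (h q.1) else 0
  simp only [← Finset.sum_add_distrib]
  refine Finset.sum_congr rfl fun p _ => Finset.sum_congr rfl fun q _ =>
    Finset.sum_congr rfl fun α _ => Finset.sum_congr rfl fun β _ => ?_
  split_ifs with hc
  · rw [Pi.add_apply, map_add, mul_add]
  · rw [add_zero]

open MvPolynomial in
lemma mulR_smul_left (c : ℚ) (f g : Rbig) : mulR (c • f) g = c • mulR f g := by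
  funext n
  show (∑ p : Fin (n+1), ∑ q : Fin (n+1), ∑ α : StrInc p.1 n, ∑ β : StrInc q.1 n,
      if Covers α β then rename α.1 ((c • f) p.1) * rename β.1 (g q.1) else 0)
    = c • ∑ p : Fin (n+1), ∑ q : Fin (n+1), ∑ α : StrInc p.1 n, ∑ β : StrInc q.1 n,
        if Covers α β then rename α.1 (f p.1) * rename β.1 (g q.1) else 0
  simp only [Finset.smul_sum]
  refine Finset.sum_congr rfl fun p _ => Finset.sum_congr rfl fun q _ =>
    Finset.sum_congr rfl fun α _ => Finset.sum_congr rfl fun β _ => ?_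
  split_ifs with hc
  · rw [Pi.smul_apply, map_smul, smul_mul_assoc]
  · rw [smul_zero]

open MvPolynomial in
lemma mulR_smul_right (c : ℚ) (f g : Rbig) : mulR f (c • g) = c • mulR f g := by
  funext n
  show (∑ p : Fin (n+1), ∑ q : Fin (n+1), ∑ α : StrInc p.1 n, ∑ β : StrInc q.1 n,
      if Covers α β then rename α.1 (f p.1) * rename β.1 ((c • g) q.1) else 0)
    = c • ∑ p : Fin (n+1), ∑ q : Fin (n+1), ∑ α : StrInc p.1 n, ∑ β : StrInc q.1 n,
        if Covers α β then rename α.1 (f p.1) * rename β.1 (g q.1) else 0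
  simp only [Finset.smul_sum]
  refine Finset.sum_congr rfl fun p _ => Finset.sum_congr rfl fun q _ =>
    Finset.sum_congr rfl fun α _ => Finset.sum_congr rfl fun β _ => ?_
  split_ifs with hc
  · rw [Pi.smul_apply, map_smul, mul_smul_comm]
  · rw [smul_zero]

open MvPolynomial in
lemma mulR_homog {f g : Rbig} {r s : ℕ} (hfh : ∀ n, (f n).IsHomogeneous r)
    (hgh : ∀ n, (g n).IsHomogeneous s) (n : ℕ) : ((mulR f g) n).IsHomogeneous (r + s) := by
  refine MvPolynomial.IsHomogeneous.sum _ _ _ fun p _ =>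
    MvPolynomial.IsHomogeneous.sum _ _ _ fun q _ =>
    MvPolynomial.IsHomogeneous.sum _ _ _ fun α _ =>
    MvPolynomial.IsHomogeneous.sum _ _ _ fun β _ => ?_
  split_ifs with hc
  · exact ((hfh p.1).rename_isHomogeneous).mul ((hgh q.1).rename_isHomogeneous)
  · exact isHomogeneous_zero _ _ _

end Stmt3Aux
end

noncomputable section

theorem stmt_3 :
    (sing 0 1 ∈ RsetAll) ∧
    (∀ f ∈ RsetAll, ∀ g ∈ RsetAll, mulR f g ∈ RsetAll) ∧
    (∀ f ∈ RsetAll, ∀ g ∈ RsetAll, mulR f g = mulR g f) ∧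
    (∀ f ∈ RsetAll, ∀ g ∈ RsetAll, ∀ h ∈ RsetAll,
      mulR (mulR f g) h = mulR f (mulR g h)) ∧
    (∀ f ∈ RsetAll, mulR (sing 0 1) f = f ∧ mulR f (sing 0 1) = f) ∧
    (∀ f ∈ RsetAll, ∀ g ∈ RsetAll, ∀ h ∈ RsetAll,
      mulR (f + g) h = mulR f h + mulR g h ∧ mulR f (g + h) = mulR f g + mulR f h) ∧
    (∀ (c : ℚ) (f : Rbig), f ∈ RsetAll → ∀ g ∈ RsetAll,
      mulR (c • f) g = c • mulR f g ∧ mulR f (c • g) = c • mulR f g) ∧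
    (∀ f ∈ RsetAll, ∀ g ∈ RsetAll, ∀ r s : ℕ,
      (∀ n, (f n).IsHomogeneous r) → (∀ n, (g n).IsHomogeneous s) →
      ∀ n, ((mulR f g) n).IsHomogeneous (r + s)) := by
  refine ⟨Stmt3Aux.sing_mem, fun f hf g hg => Stmt3Aux.mulR_mem hf hg,
    fun f hf g hg => Stmt3Aux.mulR_comm hf hg,
    fun f hf g hg h hh => Stmt3Aux.mulR_assoc hf hg hh,
    fun f hf => ⟨Stmt3Aux.mulR_one_left hf, ?_⟩,
    fun f _ g _ h _ => ⟨Stmt3Aux.mulR_add_left f g h, Stmt3Aux.mulR_add_right f g h⟩,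
    fun c f _ g _ => ⟨Stmt3Aux.mulR_smul_left c f g, Stmt3Aux.mulR_smul_right c f g⟩,
    fun f _ g _ r s hfh hgh n => Stmt3Aux.mulR_homog hfh hgh n⟩
  rw [Stmt3Aux.mulR_comm hf Stmt3Aux.sing_mem]
  exact Stmt3Aux.mulR_one_left hf

end
end

section
/- Let k be a commutative ring, M a finitely generated free ℤ/2-graded k-module with homogeneous bases (Δ_ν) and (Δ^ν) satisfying b(Δ_ν, Δ^{ν'}) = δ_{ν,ν'} for an even bilinear form b : M ⊗ M → k. Let m, n ≥ 1, 1 ≤ j ≤ m, and let v ∈ M^{⊗(m+1)}, w ∈ M^{⊗(n+1)} be even elements. Then for any α = α_0 ⊗ ⋯ ⊗ α_{m+n−1} ∈ M^{⊗(m+n)} with homogeneous α_i: ⟨v ∘_j w, α⟩ = Σ_ν (−1)^{|Δ_ν|} ⟨v, α_0 ⊗ ⋯ ⊗ α_{j−1} ⊗ Δ_ν ⊗ α_{j+n} ⊗ ⋯ ⊗ α_{m+n−1}⟩ · ⟨w, Δ^ν ⊗ α_j ⊗ ⋯ ⊗ α_{j+n−1}⟩. -/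
open scoped TensorProduct
open PiTensorProduct

open scoped Classical

noncomputable section

set_option maxHeartbeats 1600000


section helpers
variable {k : Type*} [CommRing k]

private lemma prod_ite_neg_one {γ : Type*} (s : Finset γ) (P : γ → Prop) [DecidablePred P] :
    (∏ x ∈ s, if P x then (-1:k) else 1) = (-1:k) ^ (s.filter P).card := by
  rw [Finset.prod_ite, Finset.prod_const, Finset.prod_const, one_pow, mul_one]

private lemma neg_one_pow_eq_of_even_add {x y : ℕ} (h : Even (x + y)) :
    ((-1:k) ^ x = (-1:k) ^ y) := by
  rcases Nat.even_or_odd x with hx | hx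
  · have hy : Even y := by rw [Nat.even_add] at h; exact h.mp hx
    rw [hx.neg_one_pow, hy.neg_one_pow]
  · have hy : Odd y := by
      rcases Nat.even_or_odd y with h' | h'
      · exfalso; rw [Nat.even_add] at h; exact (Nat.not_even_iff_odd.mpr hx) (h.mpr h')
      · exact h'
    rw [hx.neg_one_pow, hy.neg_one_pow]

private lemma card_lt_pairs {N : ℕ} (Q : Fin N → Prop) [DecidablePred Q] :
    (Finset.univ.filter (fun pq : Fin N × Fin N =>
      ((pq.2 : ℕ) < (pq.1 : ℕ)) ∧ Q pq.1 ∧ Q pq.2)).card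
      = (Finset.univ.filter Q).card.choose 2 := by
  classical
  set T : Finset (Fin N) := Finset.univ.filter Q with hT
  set K := T.card with hK
  have h1 : (Finset.univ.filter (fun pq : Fin N × Fin N =>
      ((pq.2 : ℕ) < (pq.1 : ℕ)) ∧ Q pq.1 ∧ Q pq.2))
      = (T ×ˢ T).filter (fun pq => pq.2 < pq.1) := by
    ext pq
    simp only [Finset.mem_filter, Finset.mem_univ, true_and, Finset.mem_product, hT,
      Fin.lt_def]
    tauto
  rw [h1]
  set Slt := (T ×ˢ T).filter (fun pq => pq.2 < pq.1) with hSlt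
  set Sgt := (T ×ˢ T).filter (fun pq => pq.1 < pq.2) with hSgt
  have hcardeq : Slt.card = Sgt.card := by
    apply Finset.card_nbij' (fun pq => pq.swap) (fun pq => pq.swap)
    · intro a ha; simp only [hSlt, hSgt, Finset.mem_coe, Finset.mem_filter, Finset.mem_product] at *
      exact ⟨⟨ha.1.2, ha.1.1⟩, ha.2⟩
    · intro a ha; simp only [hSlt, hSgt, Finset.mem_coe, Finset.mem_filter, Finset.mem_product] at *
      exact ⟨⟨ha.1.2, ha.1.1⟩, ha.2⟩
    · intro a _; simp
    · intro a _; simp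
  have hunion : Slt ∪ Sgt = T.offDiag := by
    rw [hSlt, hSgt, ← Finset.filter_or]
    ext pq
    simp only [Finset.mem_filter, Finset.mem_offDiag, Finset.mem_product, ne_iff_lt_or_gt]
    tauto
  have hdisj : Disjoint Slt Sgt := by
    rw [Finset.disjoint_filter]
    intro pq _ h1 h2
    exact absurd h1 (not_lt_of_gt h2)
  have hcards : Slt.card + Sgt.card = K * K - K := by
    rw [← Finset.card_union_of_disjoint hdisj, hunion, Finset.offDiag_card]
  have hKK : K * K - K = K * (K - 1) := by
    rcases K with _ | t
    · simp
    · have h2 : t + 1 - 1 = t := rfl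
      rw [h2]
      have : (t+1) * (t+1) = (t+1) * t + (t+1) := by ring
      omega
  rw [Nat.choose_two_right]
  omega

private lemma mul_parity (x : ℕ) : x * (x + x - 1) % 2 = x % 2 := by
  rcases x with _ | s
  · simp
  · have h1 : (s + 1 + (s + 1) - 1) % 2 = 1 := by omega
    rw [Nat.mul_mod, h1, mul_one, Nat.mod_mod]

private lemma choose_two_double (a : ℕ) : (a + a).choose 2 = a * (a + a - 1) := by
  rw [Nat.choose_two_right]
  have h : (a + a) * (a + a - 1) = 2 * (a * (a + a - 1)) := by
    rcases a with _ | t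
    · simp
    · set q := t + 1 + (t + 1) - 1 with hq
      ring
  rw [h, Nat.mul_div_cancel_left _ (by norm_num)]

private lemma sign_arith {Kv Kw Ku δ : ℕ} (hδ : δ ≤ 1) (hv : Even Kv) (hw : Even Kw)
    (h : Ku + δ + δ = Kv + Kw) :
    Even (Ku.choose 2 + (δ + Kv.choose 2 + Kw.choose 2)) := by
  obtain ⟨a, ha⟩ := hv
  obtain ⟨c, hc⟩ := hw
  have hu : Ku = (a + c - δ) + (a + c - δ) := by omega
  rw [ha, hc, hu, choose_two_double, choose_two_double, choose_two_double, Nat.even_iff]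
  have h1 := mul_parity a
  have h2 := mul_parity c
  have h3 := mul_parity (a + c - δ)
  omega

end helpers

private lemma key_pure
    (k : Type*) [CommRing k] [Nontrivial k]
    (M : Type*) [AddCommGroup M] [Module k M]
    (M0 M1 : Submodule k M)
    (b : M →ₗ[k] M →ₗ[k] k)
    (hb_even : (∀ v ∈ M0, ∀ w ∈ M1, b v w = 0) ∧ (∀ v ∈ M1, ∀ w ∈ M0, b v w = 0))
    (ι : Type*) [Fintype ι]
    (Δ Δ' : Module.Basis ι k M)
    (hΔ : ∀ ν, Δ ν ∈ M0 ∨ Δ ν ∈ M1) (hΔ' : ∀ ν, Δ' ν ∈ M0 ∨ Δ' ν ∈ M1)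
    (hdual : ∀ ν ν', b (Δ ν) (Δ' ν') = if ν = ν' then 1 else 0)
    (pair : ∀ n : ℕ, (⨂[k] (_ : Fin n), M) →ₗ[k] (⨂[k] (_ : Fin n), M) →ₗ[k] k)
    (hpair : ∀ (n : ℕ) (v a : Fin n → M),
      (∀ i, v i ∈ M0 ∨ v i ∈ M1) → (∀ i, a i ∈ M0 ∨ a i ∈ M1) →
      pair n (tprod k v) (tprod k a) =
        (∏ p : Fin n × Fin n,
          if (p.2 : ℕ) < (p.1 : ℕ) ∧
              (v p.1 ∈ M1 ∧ v p.1 ∉ M0) ∧ (a p.2 ∈ M1 ∧ a p.2 ∉ M0)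
          then (-1 : k) else 1) *
        ∏ i, b (v i) (a i))
    (comp : ∀ m n _j : ℕ,
      (⨂[k] (_ : Fin (m+1)), M) →ₗ[k] (⨂[k] (_ : Fin (n+1)), M) →ₗ[k]
        (⨂[k] (_ : Fin (m+n)), M))
    (hcomp : ∀ (m n j : ℕ) (_hm : 1 ≤ m) (_hn : 1 ≤ n) (_hj1 : 1 ≤ j) (_hjm : j ≤ m),
      ∀ (v : Fin (m+1) → M) (w : Fin (n+1) → M),
      (∀ i, v i ∈ M0 ∨ v i ∈ M1) → (∀ i, w i ∈ M0 ∨ w i ∈ M1) →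
      comp m n j (tprod k v) (tprod k w) =
        ((∏ p : Fin (n+1) × Fin (m+1),
            if j < (p.2 : ℕ) ∧
                (w p.1 ∈ M1 ∧ w p.1 ∉ M0) ∧ (v p.2 ∈ M1 ∧ v p.2 ∉ M0)
            then (-1 : k) else 1) *
          b (v ⟨j, by have := _hm; omega⟩) (w 0)) •
        tprod k (fun i : Fin (m+n) =>
          if _h1 : (i : ℕ) < j then v ⟨i, by have := i.isLt; lia⟩
          else if _h2 : (i : ℕ) < j + n then w ⟨(i : ℕ) - j + 1, by have := i.isLt; lia⟩
          else v ⟨(i : ℕ) - n + 1, by have := i.isLt; lia⟩))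
    (m n j : ℕ) (hm : 1 ≤ m) (hn : 1 ≤ n) (hj1 : 1 ≤ j) (hjm : j ≤ m)
    (α : Fin (m+n) → M) (hα : ∀ i, α i ∈ M0 ∨ α i ∈ M1)
    (vv : Fin (m+1) → M) (hvh : ∀ i, vv i ∈ M0 ∨ vv i ∈ M1)
    (hve : Even (Finset.univ.filter (fun i => vv i ∈ M1 ∧ vv i ∉ M0)).card)
    (ww : Fin (n+1) → M) (hwh : ∀ i, ww i ∈ M0 ∨ ww i ∈ M1)
    (hwe : Even (Finset.univ.filter (fun i => ww i ∈ M1 ∧ ww i ∉ M0)).card) :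
    pair (m+n) (comp m n j (tprod k vv) (tprod k ww)) (tprod k α) =
      ∑ ν : ι,
        (if Δ ν ∈ M1 ∧ Δ ν ∉ M0 then (-1 : k) else 1) *
        ((pair (m+1) (tprod k vv) (tprod k (fun i : Fin (m+1) =>
            if _h1 : (i : ℕ) < j then α ⟨i, by have := i.isLt; lia⟩
            else if _h2 : (i : ℕ) = j then Δ ν
            else α ⟨(i : ℕ) + n - 1, by have := i.isLt; lia⟩))) *
        (pair (n+1) (tprod k ww) (tprod k
          ((Fin.cases (Δ' ν)
            (fun i : Fin n => α ⟨j + (i : ℕ), by have := i.isLt; lia⟩)) :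
              Fin (n+1) → M)))) := by
  have jlt : j < m + 1 := by omega
  set jj : Fin (m+1) := ⟨j, jlt⟩ with hjj
  set A : ι → Fin (m+1) → M := fun ν i =>
    if _h1 : (i : ℕ) < j then α ⟨i, by have := i.isLt; lia⟩
    else if _h2 : (i : ℕ) = j then Δ ν
    else α ⟨(i : ℕ) + n - 1, by have := i.isLt; lia⟩ with hA
  set B : ι → Fin (n+1) → M := fun ν =>
    ((Fin.cases (Δ' ν)
      (fun i : Fin n => α ⟨j + (i : ℕ), by have := i.isLt; lia⟩)) : Fin (n+1) → M) with hB
  set u : Fin (m+n) → M := fun i =>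
    if _h1 : (i : ℕ) < j then vv ⟨i, by have := i.isLt; lia⟩
    else if _h2 : (i : ℕ) < j + n then ww ⟨(i : ℕ) - j + 1, by have := i.isLt; lia⟩
    else vv ⟨(i : ℕ) - n + 1, by have := i.isLt; lia⟩ with hu
  -- homogeneity of the composite families
  have hAh : ∀ ν i, A ν i ∈ M0 ∨ A ν i ∈ M1 := by
    intro ν i
    simp only [hA]
    split_ifs
    · exact hα _
    · exact hΔ ν
    · exact hα _
  have hBh : ∀ ν i, B ν i ∈ M0 ∨ B ν i ∈ M1 := by
    intro ν i
    induction i using Fin.cases with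
    | zero => simpa only [hB, Fin.cases_zero] using hΔ' ν
    | succ i => simpa only [hB, Fin.cases_succ] using hα _
  have huh : ∀ i, u i ∈ M0 ∨ u i ∈ M1 := by
    intro i
    simp only [hu]
    split_ifs
    · exact hvh _
    · exact hwh _
    · exact hvh _
  -- value lemmas
  have hu1 : ∀ (i : ℕ) (h : i < m+n) (hij : i < j), u ⟨i, h⟩ = vv ⟨i, by omega⟩ := by
    intro i h hij; simp only [hu]; rw [dif_pos hij]
  have hu2 : ∀ (i : ℕ) (h : i < m+n) (hij : j ≤ i) (hij2 : i < j + n), u ⟨i, h⟩ = ww ⟨i - j + 1, by omega⟩ := by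
    intro i h hij hij2; simp only [hu]; rw [dif_neg (by omega), dif_pos (by simpa using hij2)]
  have hu3 : ∀ (i : ℕ) (h : i < m+n) (hij : j + n ≤ i), u ⟨i, h⟩ = vv ⟨i - n + 1, by omega⟩ := by
    intro i h hij; simp only [hu]; rw [dif_neg (by omega), dif_neg (by simpa using not_lt_of_ge hij)]
  have hA1 : ∀ (ν : ι) (i : ℕ) (h : i < m+1) (hij : i < j), A ν ⟨i, h⟩ = α ⟨i, by omega⟩ := by
    intro ν i h hij; simp only [hA]; rw [dif_pos (by simpa using hij)]
  have hA2 : ∀ ν : ι, A ν jj = Δ ν := by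
    intro ν; simp only [hA, hjj]; rw [dif_neg (by simp), dif_pos (by simp)]
  have hA3 : ∀ (ν : ι) (i : ℕ) (h : i < m+1) (hij : j < i), A ν ⟨i, h⟩ = α ⟨i + n - 1, by omega⟩ := by
    intro ν i h hij; simp only [hA]
    rw [dif_neg (by simpa using by omega : ¬ ((⟨i,h⟩ : Fin (m+1)) : ℕ) < j)]
    rw [dif_neg (by simpa using by omega : ¬ ((⟨i,h⟩ : Fin (m+1)) : ℕ) = j)]
  have hB0 : ∀ ν : ι, B ν 0 = Δ' ν := by
    intro ν; simp only [hB, Fin.cases_zero]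
  have hBs : ∀ (ν : ι) (i : ℕ) (h : i < n+1) (hi : 1 ≤ i), B ν ⟨i, h⟩ = α ⟨j + (i - 1), by omega⟩ := by
    intro ν i h hi
    have : (⟨i, h⟩ : Fin (n+1)) = Fin.succ ⟨i - 1, by omega⟩ := by
      apply Fin.ext; simp [Fin.succ]; omega
    rw [this]; simp only [hB, Fin.cases_succ]
  -- fixed "fillers"
  set A0 : Fin (m+1) → M := fun i =>
    if _h1 : (i : ℕ) < j then α ⟨i, by have := i.isLt; lia⟩
    else if _h2 : (i : ℕ) = j then 0
    else α ⟨(i : ℕ) + n - 1, by have := i.isLt; lia⟩ with hA0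
  set B0 : Fin (n+1) → M := ((Fin.cases 0
      (fun i : Fin n => α ⟨j + (i : ℕ), by have := i.isLt; lia⟩)) : Fin (n+1) → M) with hB0'
  have hA01 : ∀ (i : ℕ) (h : i < m+1) (hij : i < j), A0 ⟨i, h⟩ = α ⟨i, by omega⟩ := by
    intro i h hij; simp only [hA0]; rw [dif_pos (by simpa using hij)]
  have hA03 : ∀ (i : ℕ) (h : i < m+1) (hij : j < i), A0 ⟨i, h⟩ = α ⟨i + n - 1, by omega⟩ := by
    intro i h hij; simp only [hA0]
    rw [dif_neg (by simpa using by omega : ¬ ((⟨i,h⟩ : Fin (m+1)) : ℕ) < j)]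
    rw [dif_neg (by simpa using by omega : ¬ ((⟨i,h⟩ : Fin (m+1)) : ℕ) = j)]
  have hB0s : ∀ (i : ℕ) (h : i < n+1) (hi : 1 ≤ i), B0 ⟨i, h⟩ = α ⟨j + (i - 1), by omega⟩ := by
    intro i h hi
    have : (⟨i, h⟩ : Fin (n+1)) = Fin.succ ⟨i - 1, by omega⟩ := by
      apply Fin.ext; simp [Fin.succ]; omega
    rw [this]; simp only [hB0', Fin.cases_succ]
  have hAA0 : ∀ (ν : ι) (i : Fin (m+1)), i ≠ jj → A ν i = A0 i := by
    intro ν i hi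
    have hij : (i : ℕ) ≠ j := fun h => hi (Fin.ext h)
    rcases lt_or_gt_of_ne hij with h' | h'
    · rw [show i = (⟨(i:ℕ), i.isLt⟩ : Fin (m+1)) from (Fin.eta i i.isLt).symm,
        hA1 ν i i.isLt h', hA01 i i.isLt h']
    · rw [show i = (⟨(i:ℕ), i.isLt⟩ : Fin (m+1)) from (Fin.eta i i.isLt).symm,
        hA3 ν i i.isLt h', hA03 i i.isLt h']
  have hBB0 : ∀ (ν : ι) (i : Fin (n+1)), i ≠ 0 → B ν i = B0 i := by
    intro ν i hi
    have hi1 : 1 ≤ (i : ℕ) := by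
      rcases Nat.eq_zero_or_pos (i : ℕ) with h' | h'
      · exact absurd (Fin.ext h') hi
      · exact h'
    rw [show i = (⟨(i:ℕ), i.isLt⟩ : Fin (n+1)) from (Fin.eta i i.isLt).symm,
      hBs ν i i.isLt hi1, hB0s i i.isLt hi1]
  -- signs and products
  set Sc : k := ∏ p : Fin (n+1) × Fin (m+1),
      if j < (p.2 : ℕ) ∧ (ww p.1 ∈ M1 ∧ ww p.1 ∉ M0) ∧ (vv p.2 ∈ M1 ∧ vv p.2 ∉ M0)
      then (-1 : k) else 1 with hSc
  set Su : k := ∏ p : Fin (m+n) × Fin (m+n),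
      if (p.2 : ℕ) < (p.1 : ℕ) ∧ (u p.1 ∈ M1 ∧ u p.1 ∉ M0) ∧ (α p.2 ∈ M1 ∧ α p.2 ∉ M0)
      then (-1 : k) else 1 with hSu
  set S1 : ι → k := fun ν => ∏ p : Fin (m+1) × Fin (m+1),
      if (p.2 : ℕ) < (p.1 : ℕ) ∧ (vv p.1 ∈ M1 ∧ vv p.1 ∉ M0) ∧ (A ν p.2 ∈ M1 ∧ A ν p.2 ∉ M0)
      then (-1 : k) else 1 with hS1
  set S2 : ι → k := fun ν => ∏ p : Fin (n+1) × Fin (n+1),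
      if (p.2 : ℕ) < (p.1 : ℕ) ∧ (ww p.1 ∈ M1 ∧ ww p.1 ∉ M0) ∧ (B ν p.2 ∈ M1 ∧ B ν p.2 ∉ M0)
      then (-1 : k) else 1 with hS2
  set P : k := ∏ i, b (u i) (α i) with hP
  set Pv : k := ∏ i : Fin (m+1), (if i = jj then 1 else b (vv i) (A0 i)) with hPv
  set Pw : k := ∏ i : Fin (n+1), (if i = 0 then 1 else b (ww i) (B0 i)) with hPw
  -- the left-hand side
  have hL : pair (m+n) (comp m n j (tprod k vv) (tprod k ww)) (tprod k α)
      = Sc * b (vv jj) (ww 0) * (Su * P) := by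
    have hc : comp m n j (tprod k vv) (tprod k ww)
        = (Sc * b (vv jj) (ww 0)) • tprod k u := by
      rw [hcomp m n j hm hn hj1 hjm vv ww hvh hwh]
    rw [hc, map_smul, LinearMap.smul_apply, smul_eq_mul,
      hpair (m+n) u α huh hα, mul_assoc]
  -- Sc = 1
  have hSc1 : Sc = 1 := by
    rw [hSc, prod_ite_neg_one]
    apply Even.neg_one_pow
    have hcard : (Finset.univ.filter (fun p : Fin (n+1) × Fin (m+1) =>
        j < (p.2 : ℕ) ∧ (ww p.1 ∈ M1 ∧ ww p.1 ∉ M0) ∧ (vv p.2 ∈ M1 ∧ vv p.2 ∉ M0))).card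
        = (Finset.univ.filter (fun i => ww i ∈ M1 ∧ ww i ∉ M0)).card *
          (Finset.univ.filter (fun s : Fin (m+1) =>
            j < (s : ℕ) ∧ (vv s ∈ M1 ∧ vv s ∉ M0))).card := by
      rw [← Finset.card_product, ← Finset.filter_product, ← Finset.univ_product_univ]
      congr 1
      apply Finset.filter_congr
      intro p _
      constructor
      · rintro ⟨h1, h2, h3⟩; exact ⟨h2, h1, h3⟩
      · rintro ⟨h1, h2, h3⟩; exact ⟨h2, h1, h3⟩
    rw [hcard]
    exact hwe.mul_right _
  -- congruence helpers
  have finmk : ∀ (N a c : ℕ) (ha : a < N) (hc : c < N), a = c → (⟨a,ha⟩ : Fin N) = ⟨c,hc⟩ := by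
    intro N a c ha hc h; subst h; rfl
  have bcongr : ∀ {x x' y y' : M}, x = x' → y = y' → b x y = b x' y' := by
    intro x x' y y' h1 h2; rw [h1, h2]
  -- split of the main product
  have hPsplit : P = Pv * Pw := by
    set f : ℕ → k := fun i => if h : i < m+n then b (u ⟨i, h⟩) (α ⟨i, h⟩) else 1 with hf
    set g : ℕ → k := fun i => if h : i < m+1 then
      (if i = j then 1 else b (vv ⟨i, h⟩) (A0 ⟨i, h⟩)) else 1 with hg
    set g2 : ℕ → k := fun i => if h : i < n+1 then
      (if i = 0 then 1 else b (ww ⟨i, h⟩) (B0 ⟨i, h⟩)) else 1 with hg2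
    have hPf : P = ∏ i ∈ Finset.range (m+n), f i := by
      rw [hP, ← Fin.prod_univ_eq_prod_range]
      apply Finset.prod_congr rfl
      intro i _
      simp only [hf]
      rw [dif_pos i.isLt]
    have hPvg : Pv = ∏ i ∈ Finset.range (m+1), g i := by
      rw [hPv, ← Fin.prod_univ_eq_prod_range]
      apply Finset.prod_congr rfl
      intro i _
      simp only [hg]
      rw [dif_pos i.isLt]
      refine if_congr ⟨fun h => by rw [h], fun h => Fin.ext h⟩ rfl ?_
      exact bcongr (congrArg vv (Fin.eta i i.isLt)).symm (congrArg A0 (Fin.eta i i.isLt)).symm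
    have hPwg2 : Pw = ∏ i ∈ Finset.range (n+1), g2 i := by
      rw [hPw, ← Fin.prod_univ_eq_prod_range]
      apply Finset.prod_congr rfl
      intro i _
      simp only [hg2]
      rw [dif_pos i.isLt]
      refine if_congr ⟨fun h => by rw [h]; rfl, fun h => Fin.ext h⟩ rfl ?_
      exact bcongr (congrArg ww (Fin.eta i i.isLt)).symm (congrArg B0 (Fin.eta i i.isLt)).symm
    have p1 : ∀ i ∈ Finset.range j, f i = g i := by
      intro i hi
      rw [Finset.mem_range] at hi
      simp only [hf, hg]
      rw [dif_pos (by omega : i < m+n), dif_pos (by omega : i < m+1),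
        if_neg (by omega : ¬ i = j), hu1 i (by omega) hi, hA01 i (by omega) hi]
    have p2 : ∀ i ∈ Finset.range n, f (j+i) = g2 (1+i) := by
      intro i hi
      rw [Finset.mem_range] at hi
      simp only [hf, hg2]
      rw [dif_pos (by omega : j+i < m+n), dif_pos (by omega : 1+i < n+1),
        if_neg (by omega : ¬ 1 + i = 0), hu2 (j+i) (by omega) (by omega) (by omega),
        hB0s (1+i) (by omega) (by omega)]
      exact bcongr (congrArg ww (finmk _ _ _ _ _ (by omega)))
        (congrArg α (finmk _ _ _ _ _ (by omega)))
    have p3 : ∀ i ∈ Finset.range (m-j), f (j+(n+i)) = g (j+(1+i)) := by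
      intro i hi
      rw [Finset.mem_range] at hi
      simp only [hf, hg]
      rw [dif_pos (by omega : j+(n+i) < m+n), dif_pos (by omega : j+(1+i) < m+1),
        if_neg (by omega : ¬ j + (1+i) = j), hu3 (j+(n+i)) (by omega) (by omega),
        hA03 (j+(1+i)) (by omega) (by omega)]
      exact bcongr (congrArg vv (finmk _ _ _ _ _ (by omega)))
        (congrArg α (finmk _ _ _ _ _ (by omega)))
    have q1 : g (j+0) = 1 := by
      simp only [hg, Nat.add_zero]
      rw [dif_pos jlt]
      simp
    have q2 : g2 0 = 1 := by
      simp only [hg2]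
      rw [dif_pos (by omega : 0 < n+1)]
      simp
    calc P = ∏ i ∈ Finset.range (m+n), f i := hPf
      _ = (∏ i ∈ Finset.range j, f i) *
          ((∏ i ∈ Finset.range n, f (j+i)) * (∏ i ∈ Finset.range (m-j), f (j+(n+i)))) := by
          rw [show m+n = j+(n+(m-j)) by omega, Finset.prod_range_add, Finset.prod_range_add]
      _ = (∏ i ∈ Finset.range j, g i) *
          ((∏ i ∈ Finset.range n, g2 (1+i)) * (∏ i ∈ Finset.range (m-j), g (j+(1+i)))) := by
          rw [Finset.prod_congr rfl p1, Finset.prod_congr rfl p2, Finset.prod_congr rfl p3]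
      _ = Pv * Pw := by
          rw [hPvg, hPwg2, show m+1 = j+(1+(m-j)) by omega, show n+1 = 1+n by omega]
          simp only [Finset.prod_range_add, Finset.prod_range_one]
          rw [q1, q2]
          ring
  -- counting
  have hcount : (Finset.univ.filter (fun i : Fin (m+n) => u i ∈ M1 ∧ u i ∉ M0)).card
      + ((if vv jj ∈ M1 ∧ vv jj ∉ M0 then 1 else 0)
        + (if ww 0 ∈ M1 ∧ ww 0 ∉ M0 then 1 else 0))
      = (Finset.univ.filter (fun i => vv i ∈ M1 ∧ vv i ∉ M0)).card
        + (Finset.univ.filter (fun i => ww i ∈ M1 ∧ ww i ∉ M0)).card := by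
    set fc : ℕ → ℕ := fun i => if h : i < m+n then
      (if u ⟨i,h⟩ ∈ M1 ∧ u ⟨i,h⟩ ∉ M0 then 1 else 0) else 0 with hfc
    set gc : ℕ → ℕ := fun i => if h : i < m+1 then
      (if vv ⟨i,h⟩ ∈ M1 ∧ vv ⟨i,h⟩ ∉ M0 then 1 else 0) else 0 with hgc
    set gc2 : ℕ → ℕ := fun i => if h : i < n+1 then
      (if ww ⟨i,h⟩ ∈ M1 ∧ ww ⟨i,h⟩ ∉ M0 then 1 else 0) else 0 with hgc2
    have itef : ∀ (x y : M), x = y →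
        (if x ∈ M1 ∧ x ∉ M0 then (1:ℕ) else 0) = (if y ∈ M1 ∧ y ∉ M0 then 1 else 0) := by
      intro x y h; rw [h]
    have cu : (Finset.univ.filter (fun i : Fin (m+n) => u i ∈ M1 ∧ u i ∉ M0)).card
        = ∑ i ∈ Finset.range (m+n), fc i := by
      rw [Finset.card_filter, ← Fin.sum_univ_eq_sum_range]
      apply Finset.sum_congr rfl
      intro i _
      simp only [hfc]
      rw [dif_pos i.isLt]
    have cv : (Finset.univ.filter (fun i => vv i ∈ M1 ∧ vv i ∉ M0)).card
        = ∑ i ∈ Finset.range (m+1), gc i := by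
      rw [Finset.card_filter, ← Fin.sum_univ_eq_sum_range]
      apply Finset.sum_congr rfl
      intro i _
      simp only [hgc]
      rw [dif_pos i.isLt]
    have cw : (Finset.univ.filter (fun i => ww i ∈ M1 ∧ ww i ∉ M0)).card
        = ∑ i ∈ Finset.range (n+1), gc2 i := by
      rw [Finset.card_filter, ← Fin.sum_univ_eq_sum_range]
      apply Finset.sum_congr rfl
      intro i _
      simp only [hgc2]
      rw [dif_pos i.isLt]
    have p1 : ∀ i ∈ Finset.range j, fc i = gc i := by
      intro i hi
      rw [Finset.mem_range] at hi
      simp only [hfc, hgc]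
      rw [dif_pos (by omega : i < m+n), dif_pos (by omega : i < m+1), hu1 i (by omega) hi]
    have p2 : ∀ i ∈ Finset.range n, fc (j+i) = gc2 (1+i) := by
      intro i hi
      rw [Finset.mem_range] at hi
      simp only [hfc, hgc2]
      rw [dif_pos (by omega : j+i < m+n), dif_pos (by omega : 1+i < n+1),
        hu2 (j+i) (by omega) (by omega) (by omega)]
      exact itef _ _ (congrArg ww (finmk _ _ _ _ _ (by omega)))
    have p3 : ∀ i ∈ Finset.range (m-j), fc (j+(n+i)) = gc (j+(1+i)) := by
      intro i hi
      rw [Finset.mem_range] at hi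
      simp only [hfc, hgc]
      rw [dif_pos (by omega : j+(n+i) < m+n), dif_pos (by omega : j+(1+i) < m+1),
        hu3 (j+(n+i)) (by omega) (by omega)]
      exact itef _ _ (congrArg vv (finmk _ _ _ _ _ (by omega)))
    have qv : gc (j+0) = (if vv jj ∈ M1 ∧ vv jj ∉ M0 then 1 else 0) := by
      simp only [hgc, Nat.add_zero]
      rw [dif_pos jlt]
    have qw : gc2 0 = (if ww 0 ∈ M1 ∧ ww 0 ∉ M0 then 1 else 0) := by
      simp only [hgc2]
      rw [dif_pos (by omega : 0 < n+1)]
      exact itef _ _ (congrArg ww (finmk _ _ _ _ _ rfl))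
    have su : ∑ i ∈ Finset.range (m+n), fc i
        = (∑ i ∈ Finset.range j, fc i) +
          ((∑ i ∈ Finset.range n, fc (j+i)) + (∑ i ∈ Finset.range (m-j), fc (j+(n+i)))) := by
      rw [show m+n = j+(n+(m-j)) by omega, Finset.sum_range_add, Finset.sum_range_add]
    have sv : ∑ i ∈ Finset.range (m+1), gc i
        = (∑ i ∈ Finset.range j, gc i) +
          (gc (j+0) + ∑ i ∈ Finset.range (m-j), gc (j+(1+i))) := by
      rw [show m+1 = j+(1+(m-j)) by omega, Finset.sum_range_add, Finset.sum_range_add]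
      simp only [Finset.sum_range_one]
    have sw : ∑ i ∈ Finset.range (n+1), gc2 i
        = gc2 0 + ∑ i ∈ Finset.range n, gc2 (1+i) := by
      rw [show n+1 = 1+n by omega, Finset.sum_range_add]
      simp only [Finset.sum_range_one]
    rw [cu, cv, cw, su, sv, sw, Finset.sum_congr rfl p1, Finset.sum_congr rfl p2,
      Finset.sum_congr rfl p3, qv, qw]
    ring
  -- the dual-basis contraction
  have hdualsum : ∀ x y : M, (∑ ν : ι, b x (Δ ν) * b y (Δ' ν)) = b x y := by
    intro x y
    have hrepr : ∀ ν : ι, b y (Δ' ν) = Δ.repr y ν := by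
      intro ν
      conv_lhs => rw [← Module.Basis.sum_repr Δ y]
      rw [map_sum, LinearMap.sum_apply]
      simp only [map_smul, LinearMap.smul_apply, hdual, smul_eq_mul, mul_ite, mul_one,
        mul_zero, Finset.sum_ite_eq', Finset.mem_univ, if_true]
    calc ∑ ν : ι, b x (Δ ν) * b y (Δ' ν) = ∑ ν : ι, Δ.repr y ν • b x (Δ ν) := by
          apply Finset.sum_congr rfl
          intro ν _
          rw [hrepr ν, smul_eq_mul, mul_comm]
      _ = b x y := by
          conv_rhs => rw [← Module.Basis.sum_repr Δ y, map_sum]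
          exact Finset.sum_congr rfl (fun ν _ => by rw [map_smul])
  -- parity congruence helper
  have itecongr : ∀ {x y : M}, x = y → ((x ∈ M1 ∧ x ∉ M0) ↔ (y ∈ M1 ∧ y ∉ M0)) := by
    intro x y h; rw [h]
  have hA0h : ∀ i, A0 i ∈ M0 ∨ A0 i ∈ M1 := by
    intro i
    simp only [hA0]
    split_ifs
    · exact hα _
    · exact Or.inl (zero_mem M0)
    · exact hα _
  have hB0h : ∀ i, B0 i ∈ M0 ∨ B0 i ∈ M1 := by
    intro i
    induction i using Fin.cases with
    | zero => simp only [hB0', Fin.cases_zero]; exact Or.inl (zero_mem M0)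
    | succ i => simp only [hB0', Fin.cases_succ]; exact hα _
  -- the per-ν term identity
  have hterm : ∀ ν : ι,
      (if Δ ν ∈ M1 ∧ Δ ν ∉ M0 then (-1:k) else 1) *
        ((S1 ν * ∏ i, b (vv i) (A ν i)) * (S2 ν * ∏ i, b (ww i) (B ν i)))
      = Su * (Pv * Pw * (b (vv jj) (Δ ν) * b (ww 0) (Δ' ν))) := by
    intro ν
    have hprodv : (∏ i, b (vv i) (A ν i)) = b (vv jj) (Δ ν) * Pv := by
      rw [← Finset.mul_prod_erase Finset.univ _ (Finset.mem_univ jj), hA2 ν]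
      congr 1
      rw [hPv, ← Finset.mul_prod_erase Finset.univ _ (Finset.mem_univ jj),
        if_pos (rfl : jj = jj), one_mul]
      apply Finset.prod_congr rfl
      intro i hi
      rw [if_neg (Finset.ne_of_mem_erase hi), hAA0 ν i (Finset.ne_of_mem_erase hi)]
    have hprodw : (∏ i, b (ww i) (B ν i)) = b (ww 0) (Δ' ν) * Pw := by
      rw [← Finset.mul_prod_erase Finset.univ _ (Finset.mem_univ (0 : Fin (n+1))), hB0 ν]
      congr 1
      rw [hPw, ← Finset.mul_prod_erase Finset.univ _ (Finset.mem_univ (0 : Fin (n+1))),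
        if_pos (rfl : (0 : Fin (n+1)) = 0), one_mul]
      apply Finset.prod_congr rfl
      intro i hi
      rw [if_neg (Finset.ne_of_mem_erase hi), hBB0 ν i (Finset.ne_of_mem_erase hi)]
    suffices hs : (if Δ ν ∈ M1 ∧ Δ ν ∉ M0 then (-1:k) else 1) * S1 ν * S2 ν *
        (b (vv jj) (Δ ν) * b (ww 0) (Δ' ν) * (Pv * Pw))
        = Su * (b (vv jj) (Δ ν) * b (ww 0) (Δ' ν) * (Pv * Pw)) by
      rw [hprodv, hprodw]
      linear_combination hs
    by_cases hXz : b (vv jj) (Δ ν) * b (ww 0) (Δ' ν) * (Pv * Pw) = 0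
    · rw [hXz]; ring
    have hb1 : b (vv jj) (Δ ν) ≠ 0 := by intro h; apply hXz; rw [h]; ring
    have hb2 : b (ww 0) (Δ' ν) ≠ 0 := by intro h; apply hXz; rw [h]; ring
    have hPvz : Pv ≠ 0 := by intro h; apply hXz; rw [h]; ring
    have hPwz : Pw ≠ 0 := by intro h; apply hXz; rw [h]; ring
    have hPvfac : ∀ i : Fin (m+1), i ≠ jj → b (vv i) (A0 i) ≠ 0 := by
      intro i hi hz
      apply hPvz
      rw [hPv]
      apply Finset.prod_eq_zero (Finset.mem_univ i)
      rw [if_neg hi, hz]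
    have hPwfac : ∀ i : Fin (n+1), i ≠ 0 → b (ww i) (B0 i) ≠ 0 := by
      intro i hi hz
      apply hPwz
      rw [hPw]
      apply Finset.prod_eq_zero (Finset.mem_univ i)
      rw [if_neg hi, hz]
    have hmatch : ∀ x y : M, (x ∈ M0 ∨ x ∈ M1) → (y ∈ M0 ∨ y ∈ M1) → b x y ≠ 0 →
        ((y ∈ M1 ∧ y ∉ M0) ↔ (x ∈ M1 ∧ x ∉ M0)) := by
      intro x y hx hy hbxy
      by_cases hx0 : x ∈ M0
      · by_cases hy0 : y ∈ M0
        · constructor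
          · rintro ⟨_, h⟩; exact absurd hy0 h
          · rintro ⟨_, h⟩; exact absurd hx0 h
        · exact absurd (hb_even.1 x hx0 y (hy.resolve_left hy0)) hbxy
      · by_cases hy0 : y ∈ M0
        · exact absurd (hb_even.2 x (hx.resolve_left hx0) y hy0) hbxy
        · constructor
          · intro _; exact ⟨hx.resolve_left hx0, hx0⟩
          · intro _; exact ⟨hy.resolve_left hy0, hy0⟩
    have hAm : ∀ i : Fin (m+1), ((A ν i ∈ M1 ∧ A ν i ∉ M0) ↔ (vv i ∈ M1 ∧ vv i ∉ M0)) := by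
      intro i
      by_cases hi : i = jj
      · rw [hi, hA2 ν]; exact hmatch _ _ (hvh jj) (hΔ ν) hb1
      · rw [hAA0 ν i hi]; exact hmatch _ _ (hvh i) (hA0h i) (hPvfac i hi)
    have hBm : ∀ i : Fin (n+1), ((B ν i ∈ M1 ∧ B ν i ∉ M0) ↔ (ww i ∈ M1 ∧ ww i ∉ M0)) := by
      intro i
      by_cases hi : i = 0
      · rw [hi, hB0 ν]; exact hmatch _ _ (hwh 0) (hΔ' ν) hb2
      · rw [hBB0 ν i hi]; exact hmatch _ _ (hwh i) (hB0h i) (hPwfac i hi)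
    have hΔm : (Δ ν ∈ M1 ∧ Δ ν ∉ M0) ↔ (vv jj ∈ M1 ∧ vv jj ∉ M0) := by
      have h' := hAm jj
      rw [hA2 ν] at h'
      exact h'
    have hΔ'm : (Δ' ν ∈ M1 ∧ Δ' ν ∉ M0) ↔ (ww 0 ∈ M1 ∧ ww 0 ∉ M0) := by
      have h' := hBm 0
      rw [hB0 ν] at h'
      exact h'
    have hΔΔ' : (Δ' ν ∈ M1 ∧ Δ' ν ∉ M0) ↔ (Δ ν ∈ M1 ∧ Δ ν ∉ M0) := by
      have h1 : b (Δ ν) (Δ' ν) ≠ 0 := by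
        rw [hdual ν ν, if_pos (rfl : ν = ν)]
        exact one_ne_zero
      exact hmatch _ _ (hΔ ν) (hΔ' ν) h1
    have hαu : ∀ i : Fin (m+n), ((α i ∈ M1 ∧ α i ∉ M0) ↔ (u i ∈ M1 ∧ u i ∉ M0)) := by
      intro i
      rcases Nat.lt_or_ge (i : ℕ) j with hij | hij
      · rw [show i = (⟨(i:ℕ), i.isLt⟩ : Fin (m+n)) from (Fin.eta i i.isLt).symm,
          hu1 i i.isLt hij]
        have h1 : A ν ⟨(i:ℕ), by omega⟩ = α ⟨(i:ℕ), by omega⟩ := hA1 ν _ (by omega) hij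
        exact (itecongr h1.symm).trans (hAm ⟨(i:ℕ), by omega⟩)
      · rcases Nat.lt_or_ge (i : ℕ) (j+n) with hij2 | hij2
        · rw [show i = (⟨(i:ℕ), i.isLt⟩ : Fin (m+n)) from (Fin.eta i i.isLt).symm,
            hu2 i i.isLt hij hij2]
          have h1 : B ν ⟨(i:ℕ) - j + 1, by omega⟩ = α ⟨j + ((i:ℕ) - j + 1 - 1), by omega⟩ :=
            hBs ν _ (by omega) (by omega)
          exact ((itecongr (congrArg α (finmk _ _ _ _ _ (by omega)))).trans
            (itecongr h1.symm)).trans (hBm ⟨(i:ℕ) - j + 1, by omega⟩)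
        · rw [show i = (⟨(i:ℕ), i.isLt⟩ : Fin (m+n)) from (Fin.eta i i.isLt).symm,
            hu3 i i.isLt hij2]
          have h1 : A ν ⟨(i:ℕ) - n + 1, by omega⟩ = α ⟨(i:ℕ) - n + 1 + n - 1, by omega⟩ :=
            hA3 ν _ (by omega) (by omega)
          exact ((itecongr (congrArg α (finmk _ _ _ _ _ (by omega)))).trans
            (itecongr h1.symm)).trans (hAm ⟨(i:ℕ) - n + 1, by omega⟩)
    -- convert all signs to powers of -1
    have hSu' : Su = (-1:k) ^
        ((Finset.univ.filter (fun i : Fin (m+n) => u i ∈ M1 ∧ u i ∉ M0)).card.choose 2) := by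
      rw [hSu, prod_ite_neg_one, ← card_lt_pairs (fun i : Fin (m+n) => u i ∈ M1 ∧ u i ∉ M0)]
      exact congrArg _ (congrArg Finset.card (Finset.filter_congr (fun p _ =>
        and_congr_right fun _ => and_congr_right fun _ => hαu p.2)))
    have hS1' : S1 ν = (-1:k) ^
        ((Finset.univ.filter (fun i => vv i ∈ M1 ∧ vv i ∉ M0)).card.choose 2) := by
      simp only [hS1]
      rw [prod_ite_neg_one, ← card_lt_pairs (fun i : Fin (m+1) => vv i ∈ M1 ∧ vv i ∉ M0)]
      exact congrArg _ (congrArg Finset.card (Finset.filter_congr (fun p _ =>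
        and_congr_right fun _ => and_congr_right fun _ => hAm p.2)))
    have hS2' : S2 ν = (-1:k) ^
        ((Finset.univ.filter (fun i => ww i ∈ M1 ∧ ww i ∉ M0)).card.choose 2) := by
      simp only [hS2]
      rw [prod_ite_neg_one, ← card_lt_pairs (fun i : Fin (n+1) => ww i ∈ M1 ∧ ww i ∉ M0)]
      exact congrArg _ (congrArg Finset.card (Finset.filter_congr (fun p _ =>
        and_congr_right fun _ => and_congr_right fun _ => hBm p.2)))
    have hδv : (if vv jj ∈ M1 ∧ vv jj ∉ M0 then (1:ℕ) else 0)
        = (if Δ ν ∈ M1 ∧ Δ ν ∉ M0 then 1 else 0) := if_congr hΔm.symm rfl rfl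
    have hδw : (if ww 0 ∈ M1 ∧ ww 0 ∉ M0 then (1:ℕ) else 0)
        = (if Δ ν ∈ M1 ∧ Δ ν ∉ M0 then 1 else 0) := if_congr (hΔ'm.symm.trans hΔΔ') rfl rfl
    have hcν : (if Δ ν ∈ M1 ∧ Δ ν ∉ M0 then (-1:k) else 1)
        = (-1:k) ^ (if Δ ν ∈ M1 ∧ Δ ν ∉ M0 then 1 else 0) := by split_ifs <;> simp
    rw [hcν, hS1', hS2', hSu', ← pow_add, ← pow_add]
    have heven : Even
        (((Finset.univ.filter (fun i : Fin (m+n) => u i ∈ M1 ∧ u i ∉ M0)).card.choose 2) +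
          ((if Δ ν ∈ M1 ∧ Δ ν ∉ M0 then 1 else 0) +
            ((Finset.univ.filter (fun i => vv i ∈ M1 ∧ vv i ∉ M0)).card.choose 2) +
            ((Finset.univ.filter (fun i => ww i ∈ M1 ∧ ww i ∉ M0)).card.choose 2))) := by
      apply sign_arith (by split_ifs <;> omega) hve hwe
      omega
    rw [neg_one_pow_eq_of_even_add heven]
  -- assemble
  have hR : ∀ ν : ι, (if Δ ν ∈ M1 ∧ Δ ν ∉ M0 then (-1:k) else 1) *
      ((pair (m+1) (tprod k vv) (tprod k (A ν))) * (pair (n+1) (tprod k ww) (tprod k (B ν))))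
      = Su * (Pv * Pw * (b (vv jj) (Δ ν) * b (ww 0) (Δ' ν))) := by
    intro ν
    rw [hpair (m+1) vv (A ν) hvh (hAh ν), hpair (n+1) ww (B ν) hwh (hBh ν)]
    exact hterm ν
  calc pair (m+n) (comp m n j (tprod k vv) (tprod k ww)) (tprod k α)
      = Sc * b (vv jj) (ww 0) * (Su * P) := hL
    _ = Su * (Pv * Pw * b (vv jj) (ww 0)) := by rw [hSc1, hPsplit]; ring
    _ = Su * (Pv * Pw * ∑ ν : ι, b (vv jj) (Δ ν) * b (ww 0) (Δ' ν)) := by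
        rw [hdualsum]
    _ = ∑ ν : ι, Su * (Pv * Pw * (b (vv jj) (Δ ν) * b (ww 0) (Δ' ν))) := by
        rw [Finset.mul_sum, Finset.mul_sum]
    _ = ∑ ν : ι,
        (if Δ ν ∈ M1 ∧ Δ ν ∉ M0 then (-1 : k) else 1) *
        ((pair (m+1) (tprod k vv) (tprod k (A ν))) *
         (pair (n+1) (tprod k ww) (tprod k (B ν)))) :=
        Finset.sum_congr rfl (fun ν _ => (hR ν).symm)




/-- The composition of the cyclic operad `E^s[M,b]` pairs against pure
tensors by contracting with a pair of dual homogeneous bases.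

The ℤ/2-grading of `M` is given by an internal direct sum decomposition `M = M₀ ⊕ M₁`;
an element is homogeneous iff it lies in `M₀` or in `M₁`, and has degree `1` iff it lies in
`M₁` and not in `M₀`.  The pairing `⟨,⟩` on `M^{⊗n}` and the operadic composition `∘_j` are
characterized by their (super-sign) formulas on pure tensors of homogeneous elements. -/
theorem stmt_19
    (k : Type*) [CommRing k]
    (M : Type*) [AddCommGroup M] [Module k M]
    (M0 M1 : Submodule k M) (hgrading : IsCompl M0 M1)
    (b : M →ₗ[k] M →ₗ[k] k)
    (hb_even : (∀ v ∈ M0, ∀ w ∈ M1, b v w = 0) ∧ (∀ v ∈ M1, ∀ w ∈ M0, b v w = 0))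
    (ι : Type*) [Fintype ι]
    (Δ Δ' : Module.Basis ι k M)
    (hΔ : ∀ ν, Δ ν ∈ M0 ∨ Δ ν ∈ M1) (hΔ' : ∀ ν, Δ' ν ∈ M0 ∨ Δ' ν ∈ M1)
    (hdual : ∀ ν ν', b (Δ ν) (Δ' ν') = if ν = ν' then 1 else 0)
    -- the pairing `⟨,⟩` on the tensor powers of `M`, characterized on pure homogeneous tensors
    (pair : ∀ n : ℕ, (⨂[k] (_ : Fin n), M) →ₗ[k] (⨂[k] (_ : Fin n), M) →ₗ[k] k)
    (hpair : ∀ (n : ℕ) (v a : Fin n → M),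
      (∀ i, v i ∈ M0 ∨ v i ∈ M1) → (∀ i, a i ∈ M0 ∨ a i ∈ M1) →
      pair n (tprod k v) (tprod k a) =
        (∏ p : Fin n × Fin n,
          if (p.2 : ℕ) < (p.1 : ℕ) ∧
              (v p.1 ∈ M1 ∧ v p.1 ∉ M0) ∧ (a p.2 ∈ M1 ∧ a p.2 ∉ M0)
          then (-1 : k) else 1) *
        ∏ i, b (v i) (a i))
    -- the operadic compositions `∘_j`, characterized on pure homogeneous tensors
    (comp : ∀ m n _j : ℕ,
      (⨂[k] (_ : Fin (m+1)), M) →ₗ[k] (⨂[k] (_ : Fin (n+1)), M) →ₗ[k]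
        (⨂[k] (_ : Fin (m+n)), M))
    (hcomp : ∀ (m n j : ℕ) (_hm : 1 ≤ m) (_hn : 1 ≤ n) (_hj1 : 1 ≤ j) (_hjm : j ≤ m),
      ∀ (v : Fin (m+1) → M) (w : Fin (n+1) → M),
      (∀ i, v i ∈ M0 ∨ v i ∈ M1) → (∀ i, w i ∈ M0 ∨ w i ∈ M1) →
      comp m n j (tprod k v) (tprod k w) =
        ((∏ p : Fin (n+1) × Fin (m+1),
            if j < (p.2 : ℕ) ∧
                (w p.1 ∈ M1 ∧ w p.1 ∉ M0) ∧ (v p.2 ∈ M1 ∧ v p.2 ∉ M0)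
            then (-1 : k) else 1) *
          b (v ⟨j, by omega⟩) (w 0)) •
        tprod k (fun i : Fin (m+n) =>
          if _h1 : (i : ℕ) < j then v ⟨i, by have := i.isLt; omega⟩
          else if _h2 : (i : ℕ) < j + n then w ⟨(i : ℕ) - j + 1, by have := i.isLt; omega⟩
          else v ⟨(i : ℕ) - n + 1, by have := i.isLt; omega⟩))
    -- the data of the statement
    (m n j : ℕ) (hm : 1 ≤ m) (hn : 1 ≤ n) (hj1 : 1 ≤ j) (hjm : j ≤ m)
    (v : ⨂[k] (_ : Fin (m+1)), M) (w : ⨂[k] (_ : Fin (n+1)), M)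
    -- `v` and `w` are even
    (hv : v ∈ Submodule.span k {t | ∃ vv : Fin (m+1) → M,
      (∀ i, vv i ∈ M0 ∨ vv i ∈ M1) ∧
      Even (Finset.univ.filter (fun i => vv i ∈ M1 ∧ vv i ∉ M0)).card ∧
      t = tprod k vv})
    (hw : w ∈ Submodule.span k {t | ∃ ww : Fin (n+1) → M,
      (∀ i, ww i ∈ M0 ∨ ww i ∈ M1) ∧
      Even (Finset.univ.filter (fun i => ww i ∈ M1 ∧ ww i ∉ M0)).card ∧
      t = tprod k ww})
    (α : Fin (m+n) → M) (hα : ∀ i, α i ∈ M0 ∨ α i ∈ M1) :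
    pair (m+n) (comp m n j v w) (tprod k α) =
      ∑ ν : ι,
        (if Δ ν ∈ M1 ∧ Δ ν ∉ M0 then (-1 : k) else 1) *
        (pair (m+1) v (tprod k (fun i : Fin (m+1) =>
            if _h1 : (i : ℕ) < j then α ⟨i, by have := i.isLt; omega⟩
            else if _h2 : (i : ℕ) = j then Δ ν
            else α ⟨(i : ℕ) + n - 1, by have := i.isLt; omega⟩))) *
        (pair (n+1) w (tprod k
          ((Fin.cases (Δ' ν)
            (fun i : Fin n => α ⟨j + (i : ℕ), by have := i.isLt; omega⟩)) :
              Fin (n+1) → M))) := by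
  rcases subsingleton_or_nontrivial k with hk | hk
  · exact Subsingleton.elim _ _
  -- the two sides as bilinear maps
  set F : (⨂[k] (_ : Fin (m+1)), M) →ₗ[k] (⨂[k] (_ : Fin (n+1)), M) →ₗ[k] k :=
    (comp m n j).compr₂ ((pair (m+n)).flip (tprod k α)) with hF
  set G : (⨂[k] (_ : Fin (m+1)), M) →ₗ[k] (⨂[k] (_ : Fin (n+1)), M) →ₗ[k] k :=
    ∑ ν : ι,
      (if Δ ν ∈ M1 ∧ Δ ν ∉ M0 then (-1 : k) else 1) •
      (LinearMap.smulRight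
        ((pair (m+1)).flip (tprod k (fun i : Fin (m+1) =>
            if _h1 : (i : ℕ) < j then α ⟨i, by have := i.isLt; omega⟩
            else if _h2 : (i : ℕ) = j then Δ ν
            else α ⟨(i : ℕ) + n - 1, by have := i.isLt; omega⟩)))
        ((pair (n+1)).flip (tprod k
          ((Fin.cases (Δ' ν)
            (fun i : Fin n => α ⟨j + (i : ℕ), by have := i.isLt; omega⟩)) :
              Fin (n+1) → M)))) with hG
  have key : ∀ vv : Fin (m+1) → M, (∀ i, vv i ∈ M0 ∨ vv i ∈ M1) →
      Even (Finset.univ.filter (fun i => vv i ∈ M1 ∧ vv i ∉ M0)).card →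
      ∀ ww : Fin (n+1) → M, (∀ i, ww i ∈ M0 ∨ ww i ∈ M1) →
      Even (Finset.univ.filter (fun i => ww i ∈ M1 ∧ ww i ∉ M0)).card →
      F (tprod k vv) (tprod k ww) = G (tprod k vv) (tprod k ww) := by
    intro vv hvv1 hvv2 ww hww1 hww2
    simp only [hF, hG, LinearMap.compr₂_apply, LinearMap.flip_apply, LinearMap.sum_apply,
      LinearMap.smul_apply, LinearMap.smulRight_apply, smul_eq_mul]
    exact key_pure k M M0 M1 b hb_even ι Δ Δ' hΔ hΔ' hdual pair hpair comp hcomp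
      m n j hm hn hj1 hjm α hα vv hvv1 hvv2 ww hww1 hww2
  have main : F v w = G v w := by
    refine LinearMap.eqOn_span (f := F.flip w) (g := G.flip w) ?_ hv
    intro x hx
    obtain ⟨vv, hvv1, hvv2, rfl⟩ := hx
    simp only [LinearMap.flip_apply]
    refine LinearMap.eqOn_span (f := F (tprod k vv)) (g := G (tprod k vv)) ?_ hw
    intro y hy
    obtain ⟨ww, hww1, hww2, rfl⟩ := hy
    exact key vv hvv1 hvv2 ww hww1 hww2
  have hFvw : F v w = pair (m+n) (comp m n j v w) (tprod k α) := by
    simp only [hF, LinearMap.compr₂_apply, LinearMap.flip_apply]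
  have hGvw : G v w = ∑ ν : ι,
        (if Δ ν ∈ M1 ∧ Δ ν ∉ M0 then (-1 : k) else 1) *
        (pair (m+1) v (tprod k (fun i : Fin (m+1) =>
            if _h1 : (i : ℕ) < j then α ⟨i, by have := i.isLt; omega⟩
            else if _h2 : (i : ℕ) = j then Δ ν
            else α ⟨(i : ℕ) + n - 1, by have := i.isLt; omega⟩))) *
        (pair (n+1) w (tprod k
          ((Fin.cases (Δ' ν)
            (fun i : Fin n => α ⟨j + (i : ℕ), by have := i.isLt; omega⟩)) :
              Fin (n+1) → M))) := by
    simp only [hG, LinearMap.sum_apply, LinearMap.smul_apply, LinearMap.smulRight_apply,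
      LinearMap.flip_apply, smul_eq_mul, mul_assoc]
  rw [← hFvw, ← hGvw, main]

end
end
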